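/- arXiv:2312.04666 — 3 statements merged into one kernel-verified Lean document; each statement's English description precedes it below -/
import Mathlib

section
/- Every finitely generated ideal of Λ is principal. -/
set_option linter.unusedSectionVars false
set_option synthInstance.maxHeartbeats 1000000
set_option maxHeartbeats 1000000

namespace IwAux

lemma ideal_smul_top_mem {A : Type*} [CommRing A] {J : Ideal A} {x : A} :
    x ∈ J • (⊤ : Ideal A) ↔ x ∈ J := by
  rw [smul_eq_mul, Ideal.mul_top]

/-- Newton's algorithm: lift idempotents along an adically complete ideal. -/
lemma exists_idem_lift {A : Type*} [CommRing A] (I : Ideal A) [IsAdicComplete I A]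
    (a : A) (ha : a * a - a ∈ I) : ∃ e : A, e * e = e ∧ e - a ∈ I := by
  classical
  let f : ℕ → A := fun n => Nat.rec a (fun _ b => 3 * b ^ 2 - 2 * b ^ 3) n
  have hf0 : f 0 = a := rfl
  have hfs : ∀ n, f (n + 1) = 3 * (f n) ^ 2 - 2 * (f n) ^ 3 := fun n => rfl
  have key : ∀ n, f n * f n - f n ∈ I ^ (n + 1) := by
    intro n
    induction n with
    | zero => simpa [hf0] using ha
    | succ n ih =>
        have h1 : f (n + 1) * f (n + 1) - f (n + 1)
            = (f n * f n - f n) * (f n * f n - f n) * ((2 * f n - 1) ^ 2 - 4) := by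
          rw [hfs n]; ring
        have h2 : (f n * f n - f n) * (f n * f n - f n) * ((2 * f n - 1) ^ 2 - 4)
            ∈ I ^ (n + 1) * I ^ (n + 1) :=
          Ideal.mul_mem_right _ _ (Ideal.mul_mem_mul ih ih)
        have h3 : (f n * f n - f n) * (f n * f n - f n) * ((2 * f n - 1) ^ 2 - 4)
            ∈ I ^ ((n + 1) + (n + 1)) := by rw [pow_add]; exact h2
        rw [h1]
        exact Ideal.pow_le_pow_right (by omega) h3
  have hstep : ∀ n, f (n + 1) - f n ∈ I ^ (n + 1) := by
    intro n
    have h1 : f (n + 1) - f n = -(2 * f n - 1) * (f n * f n - f n) := by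
      rw [hfs n]; ring
    rw [h1]; exact Ideal.mul_mem_left _ _ (key n)
  have hchain : ∀ m n, m ≤ n → f n - f m ∈ I ^ (m + 1) := by
    intro m n h
    induction n with
    | zero => simp [Nat.le_zero.mp h]
    | succ n ih =>
        rcases Nat.lt_or_ge m (n + 1) with h' | h'
        · have h1 := ih (by omega)
          have h2 : f (n + 1) - f m = (f (n + 1) - f n) + (f n - f m) := by ring
          rw [h2]
          exact add_mem (Ideal.pow_le_pow_right (by omega) (hstep n)) h1
        · have : m = n + 1 := by omega
          subst this; simp
  have hsmod : ∀ {m n : ℕ}, m ≤ n → f m ≡ f n [SMOD I ^ m • (⊤ : Ideal A)] := by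
    intro m n h
    rw [SModEq.sub_mem, ideal_smul_top_mem]
    have h2 : f m - f n = -(f n - f m) := by ring
    rw [h2]
    exact neg_mem (Ideal.pow_le_pow_right (by omega) (hchain m n h))
  obtain ⟨L, hL⟩ := IsPrecomplete.prec (IsAdicComplete.toIsPrecomplete (I := I) (M := A)) hsmod
  have hLn : ∀ n, L - f n ∈ I ^ n := by
    intro n
    have := (hL n)
    rw [SModEq.sub_mem, ideal_smul_top_mem] at this
    have h2 : L - f n = -(f n - L) := by ring
    rw [h2]; exact neg_mem this
  refine ⟨L, sub_eq_zero.mp ?_, ?_⟩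
  · refine IsHausdorff.haus (IsAdicComplete.toIsHausdorff (I := I) (M := A)) _ (fun n => ?_)
    rw [SModEq.sub_mem, sub_zero, ideal_smul_top_mem]
    have h1 : L * L - L = (L - f n) * (L + f n - 1) + (f n * f n - f n) := by ring
    rw [h1]
    exact add_mem (Ideal.mul_mem_right _ _ (hLn n))
      (Ideal.pow_le_pow_right (by omega) (key n))
  · have h1 := hLn 1
    have h2 := hstep 0
    have h3 : L - a = (L - f 1) + (f 1 - f 0) := by rw [hf0]; ring
    rw [h3, pow_one] at *
    exact add_mem h1 h2

/-- In a ring whose submodule lattice is complemented, every ideal is generated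
by an idempotent. -/
lemma ideal_eq_span_idem {A : Type*} [CommRing A]
    [ComplementedLattice (Submodule A A)] (I : Ideal A) :
    ∃ e : A, e * e = e ∧ I = Ideal.span {e} := by
  obtain ⟨q, hq⟩ := exists_isCompl (I : Submodule A A)
  have htop : I ⊔ q = ⊤ := hq.sup_eq_top
  have hbot : I ⊓ q = ⊥ := hq.inf_eq_bot
  have h1 : (1 : A) ∈ I ⊔ q := htop ▸ Submodule.mem_top
  obtain ⟨e, he, g, hg, heg⟩ := Submodule.mem_sup.mp h1
  have key : ∀ x ∈ I, x * e = x := by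
    intro x hx
    have hxg : x * g ∈ I ⊓ q := by
      constructor
      · have : x * g = x - x * e := by
          have : x * (e + g) = x * 1 := by rw [heg]
          rw [mul_one, mul_add] at this
          linear_combination this
        rw [this]; exact sub_mem hx (Ideal.mul_mem_right _ _ hx)
      · exact q.smul_mem x hg
    have : x * g = 0 := by rw [hbot] at hxg; exact hxg
    have h2 : x * (e + g) = x * 1 := by rw [heg]
    rw [mul_one, mul_add, this, add_zero] at h2
    exact h2
  refine ⟨e, key e he, le_antisymm ?_ ?_⟩
  · intro x hx
    rw [Ideal.mem_span_singleton']
    exact ⟨x, key x hx⟩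
  · rw [Ideal.span_le, Set.singleton_subset_iff]; exact he

variable {ℓ : ℕ} [Fact ℓ.Prime] {G : Type} [CommGroup G] [Fintype G]

local notation "R" => MonoidAlgebra ℤ_[ℓ] G

lemma coord_natCast_mul (m : ℕ) (y : R) (g : G) :
    (((m : ℕ) : R) * y).coeff g = ((m : ℕ) : ℤ_[ℓ]) * y.coeff g := by
  rw [← nsmul_eq_mul, MonoidAlgebra.coeff_smul_apply, nsmul_eq_mul]

lemma mem_span_ell_pow {x : R} {n : ℕ} :
    x ∈ (Ideal.span {((ℓ : ℕ) : R)}) ^ n ↔ ∀ g : G, ((ℓ : ℕ) : ℤ_[ℓ]) ^ n ∣ x.coeff g := by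
  classical
  rw [Ideal.span_singleton_pow, Ideal.mem_span_singleton]
  constructor
  · rintro ⟨y, rfl⟩ g
    refine ⟨y.coeff g, ?_⟩
    rw [← Nat.cast_pow, coord_natCast_mul, Nat.cast_pow]
  · intro h
    choose q hq using h
    refine ⟨MonoidAlgebra.ofCoeff (Finsupp.equivFunOnFinite.symm q), ?_⟩
    ext g
    rw [← Nat.cast_pow, coord_natCast_mul, Nat.cast_pow]
    simpa using hq g

lemma ell_pow_padic (n : ℕ) :
    (IsLocalRing.maximalIdeal ℤ_[ℓ]) ^ n = Ideal.span {((ℓ : ℕ) : ℤ_[ℓ]) ^ n} := by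
  rw [PadicInt.maximalIdeal_eq_span_p, Ideal.span_singleton_pow]

lemma monoidAlgebra_isAdicComplete :
    IsAdicComplete (Ideal.span {((ℓ : ℕ) : R)}) R := by
  classical
  have h1 : IsHausdorff (Ideal.span {((ℓ : ℕ) : R)}) R := by
    constructor
    intro x hx
    ext g
    have hg : ∀ n : ℕ, x.coeff g ≡ 0 [SMOD (IsLocalRing.maximalIdeal ℤ_[ℓ]) ^ n • (⊤ : Ideal ℤ_[ℓ])] := by
      intro n
      rw [SModEq.sub_mem, sub_zero, smul_eq_mul, Ideal.mul_top, ell_pow_padic,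
        Ideal.mem_span_singleton]
      have := hx n
      rw [SModEq.sub_mem, sub_zero, smul_eq_mul, Ideal.mul_top] at this
      exact mem_span_ell_pow.mp this g
    have := IsHausdorff.haus (inferInstance : IsHausdorff (IsLocalRing.maximalIdeal ℤ_[ℓ]) ℤ_[ℓ])
      (x.coeff g) hg
    simpa using this
  have h2 : IsPrecomplete (Ideal.span {((ℓ : ℕ) : R)}) R := by
    constructor
    intro f hf
    have hcau : ∀ g : G, ∀ {m n : ℕ}, m ≤ n →
        (f m).coeff g ≡ (f n).coeff g [SMOD (IsLocalRing.maximalIdeal ℤ_[ℓ]) ^ m • (⊤ : Ideal ℤ_[ℓ])] := by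
      intro g m n h
      rw [SModEq.sub_mem, smul_eq_mul, Ideal.mul_top, ell_pow_padic, Ideal.mem_span_singleton]
      have := hf h
      rw [SModEq.sub_mem, smul_eq_mul, Ideal.mul_top] at this
      have := mem_span_ell_pow.mp this g
      simpa using this
    have : ∀ g : G, ∃ L : ℤ_[ℓ], ∀ n : ℕ,
        (f n).coeff g ≡ L [SMOD (IsLocalRing.maximalIdeal ℤ_[ℓ]) ^ n • (⊤ : Ideal ℤ_[ℓ])] := by
      intro g
      exact IsPrecomplete.prec (inferInstance : IsPrecomplete (IsLocalRing.maximalIdeal ℤ_[ℓ]) ℤ_[ℓ])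
        (fun {m n} h => hcau g h)
    choose L hL using this
    refine ⟨MonoidAlgebra.ofCoeff (Finsupp.equivFunOnFinite.symm L), fun n => ?_⟩
    rw [SModEq.sub_mem, smul_eq_mul, Ideal.mul_top, mem_span_ell_pow]
    intro g
    have := hL g n
    rw [SModEq.sub_mem, smul_eq_mul, Ideal.mul_top, ell_pow_padic, Ideal.mem_span_singleton] at this
    simpa using this
  exact { toIsHausdorff := h1, toIsPrecomplete := h2 }

lemma monoidAlgebra_isNoetherianRing : IsNoetherianRing R := by
  have h1 : IsNoetherian ℤ_[ℓ] (G → ℤ_[ℓ]) := inferInstance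
  have h2 : IsNoetherian ℤ_[ℓ] R :=
    isNoetherian_of_linearEquiv ((Finsupp.linearEquivFunOnFinite ℤ_[ℓ] ℤ_[ℓ] G).symm.trans
      (MonoidAlgebra.coeffLinearEquiv ℤ_[ℓ]).symm)
  exact isNoetherian_of_tower ℤ_[ℓ] h2




local notation "K" => ℤ_[ℓ] ⧸ (Ideal.span {((ℓ : ℕ) : ℤ_[ℓ])})

noncomputable def rho : R →+* MonoidAlgebra K G :=
  MonoidAlgebra.liftNCRingHom
    ((MonoidAlgebra.singleOneRingHom).comp (Ideal.Quotient.mk _))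
    (MonoidAlgebra.of K G) (fun _ _ => Commute.all _ _)

lemma rho_single (a : G) (b : ℤ_[ℓ]) :
    rho (MonoidAlgebra.single a b) = MonoidAlgebra.single a (Ideal.Quotient.mk _ b) := by
  show MonoidAlgebra.liftNC _ _ (MonoidAlgebra.single a b) = _
  rw [MonoidAlgebra.liftNC_single]
  show MonoidAlgebra.single (1 : G) (Ideal.Quotient.mk _ b) * MonoidAlgebra.single a (1 : K) = _
  rw [MonoidAlgebra.single_mul_single, one_mul, mul_one]

lemma rho_apply (x : R) (g : G) : (rho x).coeff g = Ideal.Quotient.mk _ (x.coeff g) := by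
  classical
  induction x using MonoidAlgebra.induction_linear with
  | zero => simp
  | add x y hx hy =>
    rw [map_add, MonoidAlgebra.coeff_add, MonoidAlgebra.coeff_add, Finsupp.add_apply,
      Finsupp.add_apply, hx, hy, map_add]
  | single a b =>
    rw [rho_single, MonoidAlgebra.coeff_single, MonoidAlgebra.coeff_single,
      Finsupp.single_apply, Finsupp.single_apply]
    split_ifs <;> simp

lemma rho_surjective : Function.Surjective (rho (ℓ := ℓ) (G := G)) := by
  classical
  intro s
  choose lift hlift using fun v : K => Ideal.Quotient.mk_surjective v
  refine ⟨MonoidAlgebra.ofCoeff (Finsupp.equivFunOnFinite.symm (fun g => lift (s.coeff g))), ?_⟩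
  ext g
  rw [rho_apply]
  simpa using hlift (s.coeff g)

lemma rho_ker : RingHom.ker (rho (ℓ := ℓ) (G := G)) = Ideal.span {((ℓ : ℕ) : R)} := by
  classical
  ext x
  rw [RingHom.mem_ker]
  constructor
  · intro hx
    have hdvd : ∀ g : G, ((ℓ : ℕ) : ℤ_[ℓ]) ∣ x.coeff g := by
      intro g
      have : (rho x).coeff g = 0 := by rw [hx]; rfl
      rw [rho_apply] at this
      rw [← Ideal.mem_span_singleton]
      exact (Ideal.Quotient.eq_zero_iff_mem).mp this
    have : x ∈ (Ideal.span {((ℓ : ℕ) : R)}) ^ 1 := by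
      rw [mem_span_ell_pow]; simpa using hdvd
    simpa using this
  · intro hx
    rw [Ideal.mem_span_singleton] at hx
    obtain ⟨y, rfl⟩ := hx
    rw [map_mul]
    have hK : ((ℓ : ℕ) : K) = 0 := by
      rw [← map_natCast (Ideal.Quotient.mk (Ideal.span {((ℓ : ℕ) : ℤ_[ℓ])}))]
      exact Ideal.Quotient.eq_zero_iff_mem.mpr (Ideal.subset_span (Set.mem_singleton _))
    have h0 : rho ((ℓ : ℕ) : R) = 0 := by
      rw [map_natCast, ← map_natCast (algebraMap K (MonoidAlgebra K G)), hK, map_zero]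
    rw [h0, zero_mul]
lemma level_principal {p : ℕ} [Fact p.Prime] (hlp : ℓ ≠ p) (hpg : IsPGroup p G)
    (I : Ideal R) : Submodule.IsPrincipal I := by
  classical
  letI hmax : (Ideal.span {((ℓ : ℕ) : ℤ_[ℓ])}).IsMaximal :=
    by rw [← PadicInt.maximalIdeal_eq_span_p]; infer_instance
  letI : Field K := Ideal.Quotient.field (Ideal.span {((ℓ : ℕ) : ℤ_[ℓ])})
  have hK0 : ((ℓ : ℕ) : K) = 0 := by
    rw [← map_natCast (Ideal.Quotient.mk (Ideal.span {((ℓ : ℕ) : ℤ_[ℓ])}))]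
    exact Ideal.Quotient.eq_zero_iff_mem.mpr (Ideal.subset_span (Set.mem_singleton _))
  haveI hNZ : NeZero ((Nat.card G : K)) := by
    obtain ⟨n, hn⟩ := (IsPGroup.iff_card (p := p)).mp hpg
    have hcopn : Nat.Coprime p ℓ :=
      (Nat.coprime_primes (Fact.out) (Fact.out)).mpr (fun h => hlp h.symm)
    have hcopz : IsCoprime ((p : ℕ) : ℤ) ((ℓ : ℕ) : ℤ) := by
      rw [Int.isCoprime_iff_gcd_eq_one, Int.gcd_natCast_natCast]
      exact hcopn
    have hcopK : IsCoprime ((p : ℕ) : K) ((ℓ : ℕ) : K) := by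
      have := hcopz.map (Int.castRingHom K)
      simpa using this
    rw [hK0] at hcopK
    have hunit : IsUnit ((p : ℕ) : K) := isCoprime_zero_right.mp hcopK
    refine ⟨?_⟩
    rw [hn]
    push_cast
    exact (hunit.pow n).ne_zero
  haveI hNoeth : IsNoetherian R R := isNoetherianRing_iff.mp monoidAlgebra_isNoetherianRing
  haveI hComp : IsAdicComplete (Ideal.span {((ℓ : ℕ) : R)}) R := monoidAlgebra_isAdicComplete
  have hjac : Ideal.span {((ℓ : ℕ) : R)} ≤ (⊥ : Ideal R).jacobson :=
    IsAdicComplete.le_jacobson_bot _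
  set c : R := ((ℓ : ℕ) : R) with hc
  -- key step: produce the idempotent
  have key : ∀ J : Ideal R, ∃ e : R, e * e = e ∧ e ∈ J ∧ J ≤ Ideal.span {e} ⊔ Ideal.span {c} := by
    intro J
    obtain ⟨ε, hε, hJε⟩ := ideal_eq_span_idem (J.map (rho (ℓ := ℓ) (G := G)))
    obtain ⟨e₀, rfl⟩ := rho_surjective ε
    have ha : e₀ * e₀ - e₀ ∈ Ideal.span {c} := by
      rw [← rho_ker, RingHom.mem_ker, map_sub, map_mul, hε, sub_self]
    obtain ⟨e, he, hee₀⟩ := exists_idem_lift _ _ ha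
    have hrho_e : rho e = rho e₀ := by
      have : e - e₀ ∈ RingHom.ker (rho (ℓ := ℓ) (G := G)) := by rw [rho_ker]; exact hee₀
      rw [RingHom.mem_ker, map_sub, sub_eq_zero] at this
      exact this
    have hεJ : rho e ∈ J.map (rho (ℓ := ℓ) (G := G)) := by
      rw [hJε, hrho_e]
      exact Ideal.subset_span (Set.mem_singleton _)
    have hmem : e ∈ J ⊔ Ideal.span {c} := by
      have h1 : e ∈ (J.map (rho (ℓ := ℓ) (G := G))).comap (rho (ℓ := ℓ) (G := G)) := hεJ
      rw [Ideal.comap_map_of_surjective (rho (ℓ := ℓ) (G := G)) rho_surjective] at h1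
      have h2 : Ideal.comap (rho (ℓ := ℓ) (G := G)) ⊥ = Ideal.span {c} := by
        rw [← rho_ker]; rfl
      rwa [h2] at h1
    -- Nakayama to get e ∈ J
    have hsm : Ideal.span {e} ≤ J ⊔ Ideal.span {c} • Ideal.span {e} := by
      rw [Ideal.span_le, Set.singleton_subset_iff]
      obtain ⟨u, hu, v, hv, huv⟩ := Submodule.mem_sup.mp hmem
      obtain ⟨r, hr⟩ := Ideal.mem_span_singleton'.mp hv
      have h3 : e = e * u + e * v := by
        calc e = e * e := he.symm
          _ = e * (u + v) := by rw [huv]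
          _ = e * u + e * v := by ring
      have h4 : e = e * u + r * (c * e) := by rw [← hr] at h3; linear_combination h3
      refine Set.mem_of_eq_of_mem h4 ?_
      refine Submodule.add_mem _ (Submodule.mem_sup_left (Ideal.mul_mem_left _ _ hu)) ?_
      refine Submodule.mem_sup_right ?_
      rw [Ideal.smul_eq_mul, Ideal.span_singleton_mul_span_singleton]
      exact Ideal.mem_span_singleton'.mpr ⟨r, rfl⟩
    have heJ : e ∈ J := by
      have := Submodule.le_of_le_smul_of_le_jacobson_bot (Submodule.fg_span_singleton e) hjac hsm
      exact this (Ideal.subset_span (Set.mem_singleton _))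
    refine ⟨e, he, heJ, ?_⟩
    intro x hx
    have hρx : rho x ∈ Ideal.span {rho e} := by
      rw [hrho_e, ← hJε]
      exact Ideal.mem_map_of_mem _ hx
    obtain ⟨s, hs⟩ := Ideal.mem_span_singleton'.mp hρx
    obtain ⟨y, rfl⟩ := rho_surjective s
    have hker : x - y * e ∈ Ideal.span {c} := by
      rw [← rho_ker, RingHom.mem_ker, map_sub, map_mul, hs, sub_self]
    have : x = y * e + (x - y * e) := by ring
    rw [this]
    exact Submodule.add_mem _
      (Submodule.mem_sup_left (Ideal.mem_span_singleton'.mpr ⟨y, rfl⟩))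
      (Submodule.mem_sup_right hker)
  -- main noetherian induction
  refine IsNoetherian.induction (P := fun J : Ideal R => Submodule.IsPrincipal J) ?_ I
  intro I IH
  obtain ⟨e, he, heI, hIe⟩ := key I
  set J : Ideal R := Submodule.colon I (Ideal.span {c}) with hJ
  have hIJ : I ≤ J := fun x hx => Ideal.mem_colon_span_singleton.mpr (Ideal.mul_mem_right c I hx)
  have hspan_e_le : Ideal.span {e} ≤ I := by
    rw [Ideal.span_le, Set.singleton_subset_iff]; exact heI
  have hA : I = Ideal.span {e} ⊔ Ideal.span {c} * J := by
    refine le_antisymm ?_ ?_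
    · intro x hx
      obtain ⟨u, hu, v, hv, huv⟩ := Submodule.mem_sup.mp (hIe hx)
      obtain ⟨r, hr⟩ := Ideal.mem_span_singleton'.mp hv
      have hvI : v ∈ I := by
        have : v = x - u := by rw [← huv]; ring
        rw [this]
        exact Submodule.sub_mem _ hx (hspan_e_le hu)
      have hrJ : r ∈ J := Ideal.mem_colon_span_singleton.mpr (by rw [hr]; exact hvI)
      have hvm : v ∈ Ideal.span {c} * J := by
        have h5 : c * r ∈ Ideal.span {c} * J :=
          Ideal.mul_mem_mul (Ideal.subset_span (Set.mem_singleton _)) hrJ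
        rw [← hr, mul_comm r c]
        exact h5
      rw [← huv]
      exact Submodule.add_mem _ (Submodule.mem_sup_left hu) (Submodule.mem_sup_right hvm)
    · refine sup_le hspan_e_le ?_
      rw [Ideal.mul_le]
      intro ci hci j hj
      obtain ⟨a, ha'⟩ := Ideal.mem_span_singleton'.mp hci
      have hjc : j * c ∈ I := Ideal.mem_colon_span_singleton.mp hj
      have : ci * j = a * (j * c) := by rw [← ha']; ring
      rw [this]
      exact Ideal.mul_mem_left _ _ hjc
  by_cases hJI : J = I
  · have h1 : I ≤ Ideal.span {e} ⊔ Ideal.span {c} • I := by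
      rw [Ideal.smul_eq_mul]
      conv_lhs => rw [hA, hJI]
    have h2 : I ≤ Ideal.span {e} :=
      Submodule.le_of_le_smul_of_le_jacobson_bot (IsNoetherian.noetherian I) hjac h1
    exact ⟨⟨e, le_antisymm h2 hspan_e_le⟩⟩
  · have hJgt : J > I := lt_of_le_of_ne hIJ (Ne.symm hJI)
    obtain ⟨⟨d, hd⟩⟩ := IH J hJgt
    refine ⟨⟨e + c * d - c * d * e, ?_⟩⟩
    have hcd : Ideal.span {c} * J = Ideal.span {c * d} := by
      rw [hd]
      exact Ideal.span_singleton_mul_span_singleton c d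
    show I = Ideal.span {e + c * d - c * d * e}
    set g : R := e + c * d - c * d * e with hg
    have hge : e * g = e := by rw [hg]; linear_combination (1 - c * d) * he
    have hemem : e ∈ Ideal.span {g} := Ideal.mem_span_singleton'.mpr ⟨e, hge⟩
    rw [hA, hcd]
    refine le_antisymm (sup_le ?_ ?_) ?_
    · rw [Ideal.span_le, Set.singleton_subset_iff]; exact hemem
    · rw [Ideal.span_le, Set.singleton_subset_iff]
      have : c * d = g - e + c * d * e := by rw [hg]; ring
      rw [this]
      refine Submodule.add_mem _ (Submodule.sub_mem _ ?_ hemem) ?_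
      · exact Ideal.subset_span (Set.mem_singleton _)
      · exact Ideal.mul_mem_left _ _ hemem
    · rw [Ideal.span_le, Set.singleton_subset_iff]
      have : g = e + (1 - e) * (c * d) := by rw [hg]; ring
      rw [this]
      exact Submodule.add_mem _
        (Submodule.mem_sup_left (Ideal.subset_span (Set.mem_singleton _)))
        (Submodule.mem_sup_right (Ideal.mul_mem_left _ _ (Ideal.subset_span (Set.mem_singleton _))))

section Topology

variable {H : Type} [CommGroup H] [Fintype H] [DecidableEq G] [DecidableEq H]


/-- view a function as an element of the monoid algebra -/
noncomputable def toMA (v : G → ℤ_[ℓ]) : MonoidAlgebra ℤ_[ℓ] G :=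
  MonoidAlgebra.ofCoeff (Finsupp.equivFunOnFinite.symm v)

lemma toMA_apply (v : G → ℤ_[ℓ]) (a : G) : (toMA v).coeff a = v a := rfl

lemma toMA_coe (x : MonoidAlgebra ℤ_[ℓ] G) : toMA (⇑x.coeff) = x := by
  simp [toMA]

/-- Multiplication in coordinates. -/
lemma mul_coord (x y : MonoidAlgebra ℤ_[ℓ] G) (γ : G) :
    (x * y).coeff γ = ∑ a : G, ∑ b : G, if a * b = γ then x.coeff a * y.coeff b else 0 := by
  classical
  rw [MonoidAlgebra.coeff_mul]
  rw [Finsupp.sum]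
  rw [Finset.sum_subset (Finset.subset_univ x.coeff.support)]
  · refine Finset.sum_congr rfl (fun a _ => ?_)
    rw [Finsupp.sum]
    rw [Finset.sum_subset (Finset.subset_univ y.coeff.support)]
    intro b _ hb
    rw [Finsupp.notMem_support_iff.mp hb, mul_zero, ite_self]
  · intro a _ ha
    rw [Finsupp.notMem_support_iff.mp ha]
    rw [Finsupp.sum]
    refine Finset.sum_eq_zero (fun b _ => ?_)
    rw [zero_mul, ite_self]

lemma mapdom_coord (φ : G →* H) (x : MonoidAlgebra ℤ_[ℓ] G) (γ : H) :
    (MonoidAlgebra.mapDomainRingHom ℤ_[ℓ] φ x).coeff γ = ∑ a : G, if φ a = γ then x.coeff a else 0 := by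
  classical
  show (Finsupp.mapDomain φ x.coeff) γ = _
  rw [Finsupp.mapDomain, Finsupp.sum_apply, Finsupp.sum]
  rw [Finset.sum_subset (Finset.subset_univ x.coeff.support)]
  · refine Finset.sum_congr rfl (fun a _ => ?_)
    rw [Finsupp.single_apply]
  · intro a _ ha
    rw [Finsupp.notMem_support_iff.mp ha, Finsupp.single_zero, Finsupp.coe_zero, Pi.zero_apply]

lemma continuous_mulX :
    Continuous (fun v : (G → ℤ_[ℓ]) × (G → ℤ_[ℓ]) => ⇑(toMA v.1 * toMA v.2).coeff) := by
  classical
  apply continuous_pi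
  intro γ
  have hf : ∀ v : (G → ℤ_[ℓ]) × (G → ℤ_[ℓ]),
      (toMA v.1 * toMA v.2).coeff γ
      = ∑ a : G, ∑ b : G, if a * b = γ then v.1 a * v.2 b else 0 := by
    intro v
    refine (mul_coord (toMA v.1) (toMA v.2) γ).trans ?_
    exact Finset.sum_congr rfl fun a _ => Finset.sum_congr rfl fun b _ => by
      rw [toMA_apply, toMA_apply]
  simp only [hf]
  refine continuous_finset_sum _ (fun a _ => continuous_finset_sum _ (fun b _ => ?_))
  by_cases h : a * b = γ
  · simp only [h, if_true]
    exact ((continuous_apply a).comp continuous_fst).mul ((continuous_apply b).comp continuous_snd)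
  · simp only [h, if_false]
    exact continuous_const

lemma continuous_mapX (φ : G →* H) :
    Continuous (fun v : G → ℤ_[ℓ] => ⇑(MonoidAlgebra.mapDomainRingHom ℤ_[ℓ] φ (toMA v)).coeff) := by
  classical
  apply continuous_pi
  intro γ
  have hf : ∀ v : G → ℤ_[ℓ],
      (MonoidAlgebra.mapDomainRingHom ℤ_[ℓ] φ (toMA v)).coeff γ
      = ∑ a : G, if φ a = γ then v a else 0 := by
    intro v
    refine (mapdom_coord φ (toMA v) γ).trans ?_
    exact Finset.sum_congr rfl fun a _ => by rw [toMA_apply]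
  simp only [hf]
  refine continuous_finset_sum _ (fun a _ => ?_)
  by_cases h : φ a = γ
  · simp only [h, if_true]; exact continuous_apply a
  · simp only [h, if_false]; exact continuous_const

end Topology

end IwAux

variable (ℓ p : ℕ) [Fact ℓ.Prime] [Fact p.Prime]

/-- The `ℓ`-adic Iwasawa algebra `Λ = lim← ℤ_ℓ[Γ_n]` of an inverse system `(Γ_n)` of finite
abelian `p`-groups, realized as the subring of `∏ n, ℤ_ℓ[Γ_n]` consisting of the sequences
compatible under the ring homomorphisms induced by the transition maps `π m n`. -/
noncomputable def IwasawaAlgebra (Γ : ℕ → Type) [∀ n, CommGroup (Γ n)] [∀ n, Fintype (Γ n)]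
    (π : ∀ m n : ℕ, n ≤ m → (Γ m →* Γ n)) :
    Subring (∀ n, MonoidAlgebra ℤ_[ℓ] (Γ n)) where
  carrier := {x | ∀ (m n : ℕ) (h : n ≤ m),
    MonoidAlgebra.mapDomainRingHom ℤ_[ℓ] (π m n h) (x m) = x n}
  mul_mem' := fun {x y} hx hy m n h => by
    simp only [Pi.mul_apply, map_mul, hx m n h, hy m n h]
  one_mem' := fun m n h => by simp only [Pi.one_apply, map_one]
  add_mem' := fun {x y} hx hy m n h => by
    simp only [Pi.add_apply, map_add, hx m n h, hy m n h]
  zero_mem' := fun m n h => by simp only [Pi.zero_apply, map_zero]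
  neg_mem' := fun {x} hx m n h => by
    simp only [Pi.neg_apply, map_neg, hx m n h]

/-- Every finitely generated ideal of the Iwasawa algebra `Λ = ℤ_ℓ[[Γ]]` (`ℓ ≠ p`,
`Γ = lim← Γ_n` with `Γ_n` finite abelian `p`-groups and surjective transition maps)
is principal. -/
theorem iwasawaAlgebra_fg_ideal_isPrincipal
    (Γ : ℕ → Type) [∀ n, CommGroup (Γ n)] [∀ n, Fintype (Γ n)]
    (π : ∀ m n : ℕ, n ≤ m → (Γ m →* Γ n))
    (hpgroup : ∀ n, IsPGroup p (Γ n)) (hlp : ℓ ≠ p)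
    (hid : ∀ n, π n n le_rfl = MonoidHom.id (Γ n))
    (hcomp : ∀ (k m n : ℕ) (hnm : n ≤ m) (hmk : m ≤ k),
      (π m n hnm).comp (π k m hmk) = π k n (le_trans hnm hmk))
    (hsurj : ∀ (m n : ℕ) (h : n ≤ m), Function.Surjective (π m n h))
    (I : Ideal (IwasawaAlgebra ℓ Γ π)) (hI : I.FG) :
    Submodule.IsPrincipal I := by
  classical
  obtain ⟨k, a, ha⟩ := Submodule.fg_iff_exists_fin_generating_family.mp hI
  set T : ∀ m n : ℕ, n ≤ m → (MonoidAlgebra ℤ_[ℓ] (Γ m) →+* MonoidAlgebra ℤ_[ℓ] (Γ n)) :=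
    fun m n h => MonoidAlgebra.mapDomainRingHom ℤ_[ℓ] (π m n h) with hT
  have hTcomp : ∀ (k' m n : ℕ) (h1 : n ≤ m) (h2 : m ≤ k') (x : MonoidAlgebra ℤ_[ℓ] (Γ k')),
      T m n h1 (T k' m h2 x) = T k' n (le_trans h1 h2) x := by
    intro k' m n h1 h2 x
    show ((MonoidAlgebra.mapDomainRingHom ℤ_[ℓ] (π m n h1)).comp
      (MonoidAlgebra.mapDomainRingHom ℤ_[ℓ] (π k' m h2))) x =
        MonoidAlgebra.mapDomainRingHom ℤ_[ℓ] (π k' n (le_trans h1 h2)) x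
    rw [← MonoidAlgebra.mapDomainRingHom_comp, hcomp]
  have hamem : ∀ (i : Fin k) (m n : ℕ) (h : n ≤ m),
      T m n h ((a i : ∀ j, MonoidAlgebra ℤ_[ℓ] (Γ j)) m)
        = (a i : ∀ j, MonoidAlgebra ℤ_[ℓ] (Γ j)) n := fun i m n h => (a i).2 m n h
  let Y := ∀ n, (Γ n → ℤ_[ℓ]) × (Fin k → Γ n → ℤ_[ℓ]) × (Fin k → Γ n → ℤ_[ℓ])
  let S1 : ∀ m n : ℕ, n ≤ m → Set Y := fun m n h =>
    ({y | ⇑(T m n h (IwAux.toMA (y m).1)).coeff = (y n).1} ∩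
      ⋂ i : Fin k, {y | ⇑(T m n h (IwAux.toMA ((y m).2.1 i))).coeff = (y n).2.1 i}) ∩
      ⋂ i : Fin k, {y | ⇑(T m n h (IwAux.toMA ((y m).2.2 i))).coeff = (y n).2.2 i}
  let S2 : ℕ → Set Y := fun n =>
    {y | (y n).1 = ⇑(∑ i, IwAux.toMA ((y n).2.1 i) *
          (a i : ∀ j, MonoidAlgebra ℤ_[ℓ] (Γ j)) n).coeff} ∩
      ⋂ j : Fin k, {y | ⇑((a j : ∀ j', MonoidAlgebra ℤ_[ℓ] (Γ j')) n).coeff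
          = ⇑(IwAux.toMA ((y n).2.2 j) * IwAux.toMA (y n).1).coeff}
  let K : ℕ → Set Y := fun N =>
    (⋂ m, ⋂ (_ : m ≤ N), ⋂ n, ⋂ (h : n ≤ m), S1 m n h) ∩ ⋂ n, ⋂ (_ : n ≤ N), S2 n
  -- continuity facts
  have hcont1 : ∀ (n : ℕ), Continuous (fun y : Y => (y n).1) :=
    fun n => (continuous_fst.comp (continuous_apply n))
  have hcont2 : ∀ (n : ℕ) (i : Fin k), Continuous (fun y : Y => (y n).2.1 i) :=
    fun n i => (continuous_apply i).comp ((continuous_fst.comp continuous_snd).comp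
      (continuous_apply n))
  have hcont3 : ∀ (n : ℕ) (i : Fin k), Continuous (fun y : Y => (y n).2.2 i) :=
    fun n i => (continuous_apply i).comp ((continuous_snd.comp continuous_snd).comp
      (continuous_apply n))
  have hcontT : ∀ (m n : ℕ) (h : n ≤ m) (w : Y → Γ m → ℤ_[ℓ]), Continuous w →
      Continuous (fun y : Y => ⇑(T m n h (IwAux.toMA (w y))).coeff) := by
    intro m n h w hw
    letI := Classical.decEq (Γ m)
    letI := Classical.decEq (Γ n)
    exact (IwAux.continuous_mapX (π m n h)).comp hw
  have hcontMul : ∀ (n : ℕ) (u v : Y → Γ n → ℤ_[ℓ]), Continuous u → Continuous v →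
      Continuous (fun y : Y => ⇑(IwAux.toMA (u y) * IwAux.toMA (v y)).coeff) := by
    intro n u v hu hv
    letI := Classical.decEq (Γ n)
    exact Continuous.comp (g := fun v : (Γ n → ℤ_[ℓ]) × (Γ n → ℤ_[ℓ]) =>
      ⇑(IwAux.toMA v.1 * IwAux.toMA v.2).coeff) (f := fun y => (u y, v y))
      IwAux.continuous_mulX (hu.prodMk hv)
  -- each K N is closed
  have hKclosed : ∀ N, IsClosed (K N) := by
    intro N
    refine IsClosed.inter ?_ ?_
    · refine isClosed_iInter (fun m => isClosed_iInter (fun _ => isClosed_iInter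
        (fun n => isClosed_iInter (fun h => ?_))))
      refine IsClosed.inter (IsClosed.inter ?_ ?_) ?_
      · exact isClosed_eq (hcontT m n h _ (hcont1 m)) (hcont1 n)
      · exact isClosed_iInter fun i =>
          isClosed_eq (hcontT m n h _ (hcont2 m i)) (hcont2 n i)
      · exact isClosed_iInter fun i =>
          isClosed_eq (hcontT m n h _ (hcont3 m i)) (hcont3 n i)
    · refine isClosed_iInter (fun n => isClosed_iInter (fun _ => ?_))
      refine IsClosed.inter ?_ ?_
      · refine isClosed_eq (hcont1 n) ?_
        have hsum : (fun y : Y => ⇑(∑ i, IwAux.toMA ((y n).2.1 i) *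
              (a i : ∀ j, MonoidAlgebra ℤ_[ℓ] (Γ j)) n).coeff)
              = (fun y : Y => ∑ i, ⇑(IwAux.toMA ((y n).2.1 i) *
                (a i : ∀ j, MonoidAlgebra ℤ_[ℓ] (Γ j)) n).coeff) := by
            funext y
            rw [MonoidAlgebra.coeff_sum, Finsupp.coe_finset_sum]
        rw [hsum]
        refine continuous_finset_sum _ (fun i _ => ?_)
        have h2 : (fun y : Y => ⇑(IwAux.toMA ((y n).2.1 i) *
              (a i : ∀ j, MonoidAlgebra ℤ_[ℓ] (Γ j)) n).coeff)
              = (fun y : Y => ⇑(IwAux.toMA ((y n).2.1 i) *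
                IwAux.toMA (⇑((a i : ∀ j, MonoidAlgebra ℤ_[ℓ] (Γ j)) n).coeff)).coeff) := by
          funext y
          rw [IwAux.toMA_coe]
        rw [h2]
        exact hcontMul n _ _ (hcont2 n i) continuous_const
      · refine isClosed_iInter (fun j => ?_)
        exact isClosed_eq continuous_const (hcontMul n _ _ (hcont3 n j) (hcont1 n))
  -- each K N is nonempty
  have hKne : ∀ N, (K N).Nonempty := by
    intro N
    obtain ⟨dN, hdN⟩ := (IwAux.level_principal (p := p) hlp (hpgroup N)
      (Ideal.span (Set.range (fun i => (a i : ∀ j, MonoidAlgebra ℤ_[ℓ] (Γ j)) N)))).principal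
    rw [Ideal.submodule_span_eq] at hdN
    have hdmem : dN ∈ Ideal.span (Set.range (fun i =>
        (a i : ∀ j, MonoidAlgebra ℤ_[ℓ] (Γ j)) N)) := by
      rw [hdN]; exact Ideal.subset_span (Set.mem_singleton _)
    obtain ⟨cN, hcN⟩ := (Submodule.mem_span_range_iff_exists_fun _).mp hdmem
    have hbj : ∀ j : Fin k, ∃ b, b * dN = (a j : ∀ j', MonoidAlgebra ℤ_[ℓ] (Γ j')) N := by
      intro j
      refine Ideal.mem_span_singleton'.mp ?_
      rw [← hdN]
      exact Ideal.subset_span (Set.mem_range_self j)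
    choose bN hbN using hbj
    refine ⟨fun n => if h : n ≤ N then
      (⇑(T N n h dN).coeff, fun i => ⇑(T N n h (cN i)).coeff, fun j => ⇑(T N n h (bN j)).coeff) else 0, ?_, ?_⟩
    · simp only [Set.mem_iInter]
      intro m hm n hn
      have hnN : n ≤ N := le_trans hn hm
      refine ⟨⟨?_, ?_⟩, ?_⟩
      · simp only [Set.mem_setOf_eq, dif_pos hm, dif_pos hnN, IwAux.toMA_coe]
        rw [hTcomp]
      · simp only [Set.mem_iInter, Set.mem_setOf_eq, dif_pos hm, dif_pos hnN, IwAux.toMA_coe]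
        intro i
        rw [hTcomp]
      · simp only [Set.mem_iInter, Set.mem_setOf_eq, dif_pos hm, dif_pos hnN, IwAux.toMA_coe]
        intro i
        rw [hTcomp]
    · simp only [Set.mem_iInter]
      intro n hn
      constructor
      · simp only [Set.mem_setOf_eq, dif_pos hn, IwAux.toMA_coe]
        have hc : T N n hn dN = ∑ i, T N n hn (cN i) *
            (a i : ∀ j, MonoidAlgebra ℤ_[ℓ] (Γ j)) n := by
          calc T N n hn dN
              = T N n hn (∑ i, cN i * (a i : ∀ j, MonoidAlgebra ℤ_[ℓ] (Γ j)) N) := by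
                rw [← hcN]
                exact congrArg _ (Finset.sum_congr rfl fun i _ => by rw [smul_eq_mul])
            _ = ∑ i, T N n hn (cN i) * (a i : ∀ j, MonoidAlgebra ℤ_[ℓ] (Γ j)) n := by
                rw [map_sum]
                exact Finset.sum_congr rfl fun i _ => by rw [map_mul, hamem]
        rw [hc]
      · simp only [Set.mem_iInter, Set.mem_setOf_eq, dif_pos hn, IwAux.toMA_coe]
        intro j
        rw [← map_mul, hbN, hamem]
  -- take a point in the intersection
  have hKanti : ∀ N, K (N + 1) ⊆ K N := by
    intro N y hy
    obtain ⟨h1, h2⟩ := hy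
    constructor
    · simp only [Set.mem_iInter] at h1 ⊢
      intro m hm n hn
      exact h1 m (by omega) n hn
    · simp only [Set.mem_iInter] at h2 ⊢
      intro n hn
      exact h2 n (by omega)
  obtain ⟨y, hy⟩ := IsCompact.nonempty_iInter_of_sequence_nonempty_isCompact_isClosed
    K hKanti hKne ((hKclosed 0).isCompact) hKclosed
  simp only [Set.mem_iInter] at hy
  have hS1 : ∀ (m n : ℕ) (h : n ≤ m), y ∈ S1 m n h :=
    fun m n h => (Set.mem_iInter.mp (Set.mem_iInter.mp (Set.mem_iInter.mp
      (Set.mem_iInter.mp (hy m).1 m) le_rfl) n) h)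
  have hS2 : ∀ n : ℕ, y ∈ S2 n :=
    fun n => Set.mem_iInter.mp (Set.mem_iInter.mp (hy n).2 n) le_rfl
  -- the coordinates of y, as compatible sequences
  have hmemD : (fun n => IwAux.toMA (y n).1) ∈ IwasawaAlgebra ℓ Γ π := by
    intro m n h
    have h1 : ⇑(T m n h (IwAux.toMA (y m).1)).coeff = (y n).1 := (hS1 m n h).1.1
    show T m n h (IwAux.toMA (y m).1) = IwAux.toMA (y n).1
    rw [← h1, IwAux.toMA_coe]
  have hmemC : ∀ i : Fin k, (fun n => IwAux.toMA ((y n).2.1 i)) ∈ IwasawaAlgebra ℓ Γ π := by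
    intro i m n h
    have h1 : ⇑(T m n h (IwAux.toMA ((y m).2.1 i))).coeff = (y n).2.1 i :=
      Set.mem_iInter.mp (hS1 m n h).1.2 i
    show T m n h (IwAux.toMA ((y m).2.1 i)) = IwAux.toMA ((y n).2.1 i)
    rw [← h1, IwAux.toMA_coe]
  have hmemB : ∀ j : Fin k, (fun n => IwAux.toMA ((y n).2.2 j)) ∈ IwasawaAlgebra ℓ Γ π := by
    intro j m n h
    have h1 : ⇑(T m n h (IwAux.toMA ((y m).2.2 j))).coeff = (y n).2.2 j :=
      Set.mem_iInter.mp (hS1 m n h).2 j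
    show T m n h (IwAux.toMA ((y m).2.2 j)) = IwAux.toMA ((y n).2.2 j)
    rw [← h1, IwAux.toMA_coe]
  -- level-wise identities
  have hDlevel : ∀ n, IwAux.toMA (y n).1 = ∑ i, IwAux.toMA ((y n).2.1 i) *
      (a i : ∀ j, MonoidAlgebra ℤ_[ℓ] (Γ j)) n := by
    intro n
    have h1 : (y n).1 = ⇑(∑ i, IwAux.toMA ((y n).2.1 i) *
          (a i : ∀ j, MonoidAlgebra ℤ_[ℓ] (Γ j)) n).coeff := (hS2 n).1
    rw [← IwAux.toMA_coe (∑ i, IwAux.toMA ((y n).2.1 i) *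
        (a i : ∀ j, MonoidAlgebra ℤ_[ℓ] (Γ j)) n), ← h1]
  have hAlevel : ∀ (j : Fin k) (n : ℕ),
      (a j : ∀ j', MonoidAlgebra ℤ_[ℓ] (Γ j')) n
        = IwAux.toMA ((y n).2.2 j) * IwAux.toMA (y n).1 := by
    intro j n
    have h1 : ⇑((a j : ∀ j', MonoidAlgebra ℤ_[ℓ] (Γ j')) n).coeff
          = ⇑(IwAux.toMA ((y n).2.2 j) * IwAux.toMA (y n).1).coeff := Set.mem_iInter.mp (hS2 n).2 j
    rw [← IwAux.toMA_coe (IwAux.toMA ((y n).2.2 j) * IwAux.toMA (y n).1), ← h1,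
      IwAux.toMA_coe]
  -- conclude
  refine ⟨⟨⟨fun n => IwAux.toMA (y n).1, hmemD⟩, ?_⟩⟩
  rw [← ha]
  refine le_antisymm ?_ ?_
  · rw [Submodule.span_le]
    rintro _ ⟨j, rfl⟩
    rw [SetLike.mem_coe, Ideal.submodule_span_eq, Ideal.mem_span_singleton']
    refine ⟨⟨fun n => IwAux.toMA ((y n).2.2 j), hmemB j⟩, ?_⟩
    apply Subtype.ext
    funext n
    exact (hAlevel j n).symm
  · rw [Submodule.span_le, Set.singleton_subset_iff, SetLike.mem_coe]
    have hsum : (⟨fun n => IwAux.toMA (y n).1, hmemD⟩ : IwasawaAlgebra ℓ Γ π)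
        = ∑ i, (⟨fun n => IwAux.toMA ((y n).2.1 i), hmemC i⟩ : IwasawaAlgebra ℓ Γ π) * a i := by
      apply Subtype.ext
      have hcoe : ((∑ i, (⟨fun n => IwAux.toMA ((y n).2.1 i), hmemC i⟩ :
          IwasawaAlgebra ℓ Γ π) * a i : IwasawaAlgebra ℓ Γ π) :
            ∀ n, MonoidAlgebra ℤ_[ℓ] (Γ n))
          = ∑ i, ((fun n => IwAux.toMA ((y n).2.1 i)) *
              (a i : ∀ n, MonoidAlgebra ℤ_[ℓ] (Γ n))) :=
        AddSubmonoidClass.coe_finset_sum _ _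
      rw [hcoe]
      funext n
      rw [Finset.sum_apply]
      exact hDlevel n
    rw [hsum]
    exact Submodule.sum_mem _ (fun i _ =>
      Ideal.mul_mem_left _ _ (Submodule.subset_span (Set.mem_range_self i)))
end

section
/- For each n let G_n := ker(Γ → Γ_n) and let I_n ⊆ Λ be the closure of the ideal generated by {γ − 1 : γ ∈ G_n}, where each γ ∈ Γ is viewed in Λ via its compatible sequence of images in the Γ_m. Then the natural projection Λ → ℤ_ℓ[Γ_n] is surjective with kernel I_n, so Λ/I_n ≅ ℤ_ℓ[Γ_n]; moreover every augmentation ideal I_n is idempotent: I_n² = I_n. -/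
set_option maxHeartbeats 1000000
set_option synthInstance.maxHeartbeats 400000

variable (ℓ p : ℕ) [Fact ℓ.Prime] [Fact p.Prime]

/-- The profinite group `Γ = lim← Γ_n`, realized as the subgroup of `∏ n, Γ n` of
compatible sequences. -/
def IwasawaGamma (Γ : ℕ → Type) [∀ n, CommGroup (Γ n)]
    (π : ∀ m n : ℕ, n ≤ m → (Γ m →* Γ n)) :
    Subgroup (∀ n, Γ n) where
  carrier := {x | ∀ (m n : ℕ) (h : n ≤ m), π m n h (x m) = x n}
  mul_mem' := fun {x y} hx hy m n h => by
    simp only [Pi.mul_apply, map_mul, hx m n h, hy m n h]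
  one_mem' := fun m n h => by simp only [Pi.one_apply, map_one]
  inv_mem' := fun {x} hx m n h => by simp only [Pi.inv_apply, map_inv, hx m n h]

/-- Topology on `ℤ_ℓ[Γ_n]`: the topology of a free `ℤ_ℓ`-module of finite rank, i.e. the
topology induced by the coefficient functions. -/
noncomputable instance monoidAlgebraTopology (G : Type) :
    TopologicalSpace (MonoidAlgebra ℤ_[ℓ] G) :=
  TopologicalSpace.induced (fun x : MonoidAlgebra ℤ_[ℓ] G => (x.coeff : G → ℤ_[ℓ]))
    inferInstance

/-- The canonical image of a group element `γ ∈ Γ = lim← Γ_n` in the Iwasawa algebra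
`Λ = lim← ℤ_ℓ[Γ_n]`. -/
noncomputable def gammaToLambda (Γ : ℕ → Type) [∀ n, CommGroup (Γ n)] [∀ n, Fintype (Γ n)]
    (π : ∀ m n : ℕ, n ≤ m → (Γ m →* Γ n)) (γ : IwasawaGamma Γ π) :
    IwasawaAlgebra ℓ Γ π :=
  ⟨fun n => MonoidAlgebra.single ((γ : ∀ n, Γ n) n) 1, by
    intro m n h
    simp only [MonoidAlgebra.mapDomainRingHom_apply, MonoidAlgebra.mapDomain_single,
      γ.2 m n h]⟩

/-- The projection `Λ → ℤ_ℓ[Γ_n]`. -/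
noncomputable def lambdaProj (Γ : ℕ → Type) [∀ n, CommGroup (Γ n)] [∀ n, Fintype (Γ n)]
    (π : ∀ m n : ℕ, n ≤ m → (Γ m →* Γ n)) (n : ℕ) :
    IwasawaAlgebra ℓ Γ π →+* MonoidAlgebra ℤ_[ℓ] (Γ n) :=
  (Pi.evalRingHom (fun n => MonoidAlgebra ℤ_[ℓ] (Γ n)) n).comp
    (IwasawaAlgebra ℓ Γ π).subtype


set_option maxHeartbeats 1000000
set_option synthInstance.maxHeartbeats 400000

section AuxIw

variable {ℓ : ℕ} [Fact ℓ.Prime]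
variable {Γ : ℕ → Type} [∀ n, CommGroup (Γ n)] [∀ n, Fintype (Γ n)]

/-- Compatible lift of an element of `Γ m` through the tower. -/
noncomputable def liftFun (π : ∀ m n : ℕ, n ≤ m → (Γ m →* Γ n))
    (hsurj : ∀ (m n : ℕ) (h : n ≤ m), Function.Surjective (π m n h))
    (m : ℕ) (g : Γ m) : ∀ j, Γ j
  | 0 => π m 0 (Nat.zero_le m) g
  | (j+1) =>
      if h : j + 1 ≤ m then π m (j+1) h g
      else Classical.choose (hsurj (j+1) j (Nat.le_succ j) (liftFun π hsurj m g j))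

theorem liftFun_of_le (π : ∀ m n : ℕ, n ≤ m → (Γ m →* Γ n))
    (hsurj : ∀ (m n : ℕ) (h : n ≤ m), Function.Surjective (π m n h))
    (m : ℕ) (g : Γ m) (j : ℕ) (h : j ≤ m) :
    liftFun π hsurj m g j = π m j h g := by
  cases j with
  | zero => rfl
  | succ i => exact dif_pos h

theorem liftFun_adj (π : ∀ m n : ℕ, n ≤ m → (Γ m →* Γ n))
    (hcomp : ∀ (k m n : ℕ) (hnm : n ≤ m) (hmk : m ≤ k),
      (π m n hnm).comp (π k m hmk) = π k n (le_trans hnm hmk))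
    (hsurj : ∀ (m n : ℕ) (h : n ≤ m), Function.Surjective (π m n h))
    (m : ℕ) (g : Γ m) (j : ℕ) :
    π (j+1) j (Nat.le_succ j) (liftFun π hsurj m g (j+1)) = liftFun π hsurj m g j := by
  by_cases h : j + 1 ≤ m
  · rw [liftFun_of_le π hsurj m g (j+1) h,
      liftFun_of_le π hsurj m g j (le_trans (Nat.le_succ j) h)]
    exact DFunLike.congr_fun (hcomp m (j+1) j (Nat.le_succ j) h) g
  · show π (j+1) j _ (dite _ _ _) = _
    rw [dif_neg h]
    exact Classical.choose_spec (hsurj (j+1) j (Nat.le_succ j) (liftFun π hsurj m g j))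

theorem liftFun_compat (π : ∀ m n : ℕ, n ≤ m → (Γ m →* Γ n))
    (hid : ∀ n, π n n le_rfl = MonoidHom.id (Γ n))
    (hcomp : ∀ (k m n : ℕ) (hnm : n ≤ m) (hmk : m ≤ k),
      (π m n hnm).comp (π k m hmk) = π k n (le_trans hnm hmk))
    (hsurj : ∀ (m n : ℕ) (h : n ≤ m), Function.Surjective (π m n h))
    (m : ℕ) (g : Γ m) (a b : ℕ) (h : b ≤ a) :
    π a b h (liftFun π hsurj m g a) = liftFun π hsurj m g b := by
  induction a, h using Nat.le_induction with
  | base => rw [hid b]; rfl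
  | succ a hba ih =>
      have h1 := DFunLike.congr_fun (hcomp (a+1) a b hba (Nat.le_succ a))
        (liftFun π hsurj m g (a+1))
      simp only [MonoidHom.coe_comp, Function.comp_apply] at h1
      rw [← h1, liftFun_adj π hcomp hsurj m g a, ih]

/-- Compatible lift as an element of the inverse-limit group. -/
noncomputable def gammaLift (π : ∀ m n : ℕ, n ≤ m → (Γ m →* Γ n))
    (hid : ∀ n, π n n le_rfl = MonoidHom.id (Γ n))
    (hcomp : ∀ (k m n : ℕ) (hnm : n ≤ m) (hmk : m ≤ k),
      (π m n hnm).comp (π k m hmk) = π k n (le_trans hnm hmk))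
    (hsurj : ∀ (m n : ℕ) (h : n ≤ m), Function.Surjective (π m n h))
    (m : ℕ) (g : Γ m) : IwasawaGamma Γ π :=
  ⟨liftFun π hsurj m g, fun a b h => liftFun_compat π hid hcomp hsurj m g a b h⟩

theorem gammaLift_coord (π : ∀ m n : ℕ, n ≤ m → (Γ m →* Γ n))
    (hid : ∀ n, π n n le_rfl = MonoidHom.id (Γ n))
    (hcomp : ∀ (k m n : ℕ) (hnm : n ≤ m) (hmk : m ≤ k),
      (π m n hnm).comp (π k m hmk) = π k n (le_trans hnm hmk))
    (hsurj : ∀ (m n : ℕ) (h : n ≤ m), Function.Surjective (π m n h))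
    (m : ℕ) (g : Γ m) (j : ℕ) (h : j ≤ m) :
    ((gammaLift π hid hcomp hsurj m g : IwasawaGamma Γ π) : ∀ j, Γ j) j = π m j h g :=
  liftFun_of_le π hsurj m g j h

theorem gammaLift_self (π : ∀ m n : ℕ, n ≤ m → (Γ m →* Γ n))
    (hid : ∀ n, π n n le_rfl = MonoidHom.id (Γ n))
    (hcomp : ∀ (k m n : ℕ) (hnm : n ≤ m) (hmk : m ≤ k),
      (π m n hnm).comp (π k m hmk) = π k n (le_trans hnm hmk))
    (hsurj : ∀ (m n : ℕ) (h : n ≤ m), Function.Surjective (π m n h))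
    (m : ℕ) (g : Γ m) :
    ((gammaLift π hid hcomp hsurj m g : IwasawaGamma Γ π) : ∀ j, Γ j) m = g := by
  rw [gammaLift_coord π hid hcomp hsurj m g m le_rfl, hid m]; rfl

/-- The constant (scalar) element of the Iwasawa algebra. -/
noncomputable def constLam (ℓ : ℕ) [Fact ℓ.Prime] (Γ : ℕ → Type) [∀ n, CommGroup (Γ n)]
    [∀ n, Fintype (Γ n)] (π : ∀ m n : ℕ, n ≤ m → (Γ m →* Γ n)) (c : ℤ_[ℓ]) :
    IwasawaAlgebra ℓ Γ π :=
  ⟨fun _ => MonoidAlgebra.single 1 c, by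
    intro m n h
    show MonoidAlgebra.mapDomain (π m n h) (MonoidAlgebra.single 1 c) = MonoidAlgebra.single 1 c
    rw [MonoidAlgebra.mapDomain_single, map_one]⟩

end AuxIw
set_option linter.unusedSectionVars false

section AuxSigma

variable {ℓ p : ℕ} [Fact ℓ.Prime] [Fact p.Prime]
variable {Γ : ℕ → Type} [∀ n, CommGroup (Γ n)] [∀ n, Fintype (Γ n)]

/-- The kernel of `π M n` as a finset. -/
noncomputable def kerF (π : ∀ m n : ℕ, n ≤ m → (Γ m →* Γ n)) (n M : ℕ) (h : n ≤ M) :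
    Finset (Γ M) :=
  @Finset.filter _ (fun g => π M n h g = 1) (Classical.decPred _) Finset.univ

theorem mem_kerF {π : ∀ m n : ℕ, n ≤ m → (Γ m →* Γ n)} {n M : ℕ} {h : n ≤ M} {g : Γ M} :
    g ∈ kerF π n M h ↔ π M n h g = 1 := by
  simp [kerF]

theorem isUnit_card_kerF (π : ∀ m n : ℕ, n ≤ m → (Γ m →* Γ n))
    (hpgroup : ∀ n, IsPGroup p (Γ n)) (hlp : ℓ ≠ p) (n M : ℕ) (h : n ≤ M) :
    IsUnit (((kerF π n M h).card : ℤ_[ℓ])) := by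
  obtain ⟨e, he⟩ := (IsPGroup.iff_card).mp (hpgroup M)
  have hcard : (kerF π n M h).card = Nat.card (MonoidHom.ker (π M n h)) := by
    classical
    rw [Nat.card_eq_fintype_card]
    rw [Fintype.card_subtype]
    apply Finset.card_bij (fun a _ => a) <;> intros <;>
      simp_all [kerF, MonoidHom.mem_ker]
  have hdvd : (kerF π n M h).card ∣ p ^ e := by
    rw [hcard, ← he]; exact Subgroup.card_subgroup_dvd_card _
  obtain ⟨f, _, hf⟩ := (Nat.dvd_prime_pow (Fact.out : p.Prime)).mp hdvd
  rw [hf]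
  have hp1 : ‖((p : ℤ_[ℓ]))‖ = 1 := by
    refine le_antisymm (PadicInt.norm_le_one _) (not_lt.mp fun hlt => ?_)
    have : ((ℓ : ℤ)) ∣ ((p : ℤ)) := by
      have := (PadicInt.norm_int_lt_one_iff_dvd (p : ℤ)).mp (by exact_mod_cast hlt)
      exact_mod_cast this
    have hdl : ℓ ∣ p := Int.ofNat_dvd.mp this
    exact hlp (((Nat.prime_dvd_prime_iff_eq (Fact.out) (Fact.out)).mp hdl))
  have hup : IsUnit ((p : ℤ_[ℓ])) := PadicInt.isUnit_iff.mpr hp1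
  have : (((p ^ f : ℕ)) : ℤ_[ℓ]) = ((p : ℤ_[ℓ])) ^ f := by push_cast; ring
  rw [this]
  exact hup.pow f

/-- Fiberwise summation over kernels. -/
theorem sum_kerF_fiber {A : Type} [AddCommMonoid A] (π : ∀ m n : ℕ, n ≤ m → (Γ m →* Γ n))
    (hcomp : ∀ (k m n : ℕ) (hnm : n ≤ m) (hmk : m ≤ k),
      (π m n hnm).comp (π k m hmk) = π k n (le_trans hnm hmk))
    (hsurj : ∀ (m n : ℕ) (h : n ≤ m), Function.Surjective (π m n h))
    {n m' m : ℕ} (hn : n ≤ m') (hm : m' ≤ m) (f : Γ m' → A) :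
    ∑ k ∈ kerF π n m (hn.trans hm), f (π m m' hm k)
      = ∑ k' ∈ kerF π n m' hn, (kerF π m' m hm).card • f k' := by
  classical
  have hmaps : ∀ k ∈ kerF π n m (hn.trans hm), π m m' hm k ∈ kerF π n m' hn := by
    intro k hk
    rw [mem_kerF]
    have := DFunLike.congr_fun (hcomp m m' n hn hm) k
    simp only [MonoidHom.coe_comp, Function.comp_apply] at this
    rw [this, mem_kerF.mp hk]
  rw [← Finset.sum_fiberwise_of_maps_to hmaps (fun k => f (π m m' hm k))]
  refine Finset.sum_congr rfl fun j hj => ?_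
  have : ∀ k ∈ (kerF π n m (hn.trans hm)).filter (fun k => π m m' hm k = j),
      f (π m m' hm k) = f j := by
    intro k hk
    rw [(Finset.mem_filter.mp hk).2]
  rw [Finset.sum_congr rfl this, Finset.sum_const]
  congr 1
  -- card of the fiber equals card of ker (π m m')
  obtain ⟨k₀, hk₀⟩ := hsurj m m' hm j
  have hk₀ker : π m n (hn.trans hm) k₀ = 1 := by
    have := DFunLike.congr_fun (hcomp m m' n hn hm) k₀
    simp only [MonoidHom.coe_comp, Function.comp_apply] at this
    rw [← this, hk₀, mem_kerF.mp hj]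
  refine Finset.card_bij' (fun t _ => k₀⁻¹ * t) (fun t _ => k₀ * t) ?_ ?_ ?_ ?_
  · intro a ha
    obtain ⟨ha1, ha2⟩ := Finset.mem_filter.mp ha
    rw [mem_kerF, map_mul, map_inv, ha2, hk₀, inv_mul_cancel]
  · intro a ha
    rw [Finset.mem_filter]
    constructor
    · rw [mem_kerF, map_mul, hk₀ker, one_mul]
      have h1 := DFunLike.congr_fun (hcomp m m' n hn hm) a
      simp only [MonoidHom.coe_comp, Function.comp_apply] at h1
      rw [← h1, mem_kerF.mp ha, map_one]
    · rw [map_mul, hk₀, mem_kerF.mp ha, mul_one]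
  · intro a _; group
  · intro a _; group

theorem card_kerF_mul (π : ∀ m n : ℕ, n ≤ m → (Γ m →* Γ n))
    (hcomp : ∀ (k m n : ℕ) (hnm : n ≤ m) (hmk : m ≤ k),
      (π m n hnm).comp (π k m hmk) = π k n (le_trans hnm hmk))
    (hsurj : ∀ (m n : ℕ) (h : n ≤ m), Function.Surjective (π m n h))
    {n m' m : ℕ} (hn : n ≤ m') (hm : m' ≤ m) :
    (kerF π n m (hn.trans hm)).card = (kerF π n m' hn).card * (kerF π m' m hm).card := by
  have := sum_kerF_fiber π hcomp hsurj hn hm (fun _ => (1 : ℕ))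
  simpa [Finset.sum_const, mul_comm] using this

end AuxSigma
section AuxSigma2

variable {ℓ p : ℕ} [Fact ℓ.Prime] [Fact p.Prime]
variable {Γ : ℕ → Type} [∀ n, CommGroup (Γ n)] [∀ n, Fintype (Γ n)]

/-- The averaging idempotent over the kernel of `π M n`. -/
noncomputable def sigmaEl (ℓ : ℕ) [Fact ℓ.Prime] (π : ∀ m n : ℕ, n ≤ m → (Γ m →* Γ n))
    (n M : ℕ) (h : n ≤ M) : MonoidAlgebra ℤ_[ℓ] (Γ M) :=
  (Ring.inverse (((kerF π n M h).card : ℤ_[ℓ]))) •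
    ∑ k ∈ kerF π n M h, MonoidAlgebra.single k 1

theorem mapDomainRingHom_eq (π : ∀ m n : ℕ, n ≤ m → (Γ m →* Γ n)) {m n : ℕ} (h : n ≤ m)
    (x : MonoidAlgebra ℤ_[ℓ] (Γ m)) :
    MonoidAlgebra.mapDomainRingHom ℤ_[ℓ] (π m n h) x = MonoidAlgebra.mapDomain (π m n h) x := rfl

theorem mapDomain_sigmaEl (π : ∀ m n : ℕ, n ≤ m → (Γ m →* Γ n))
    (hpgroup : ∀ n, IsPGroup p (Γ n)) (hlp : ℓ ≠ p)
    (hcomp : ∀ (k m n : ℕ) (hnm : n ≤ m) (hmk : m ≤ k),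
      (π m n hnm).comp (π k m hmk) = π k n (le_trans hnm hmk))
    (hsurj : ∀ (m n : ℕ) (h : n ≤ m), Function.Surjective (π m n h))
    {n m' m : ℕ} (hn : n ≤ m') (hm : m' ≤ m) :
    MonoidAlgebra.mapDomainRingHom ℤ_[ℓ] (π m m' hm) (sigmaEl ℓ π n m (hn.trans hm))
      = sigmaEl ℓ π n m' hn := by
  rw [mapDomainRingHom_eq, sigmaEl, MonoidAlgebra.mapDomain_smul]
  rw [show MonoidAlgebra.mapDomain (π m m' hm) (∑ k ∈ kerF π n m (hn.trans hm),
        MonoidAlgebra.single k (1 : ℤ_[ℓ]))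
      = ∑ k ∈ kerF π n m (hn.trans hm),
          MonoidAlgebra.single ((π m m' hm) k) (1 : ℤ_[ℓ]) by
    rw [← mapDomainRingHom_eq π hm, map_sum]
    exact Finset.sum_congr rfl fun k _ => MonoidAlgebra.mapDomain_single]
  rw [sum_kerF_fiber π hcomp hsurj hn hm (fun k' => MonoidAlgebra.single k' (1 : ℤ_[ℓ]))]
  rw [sigmaEl, Finset.smul_sum, Finset.smul_sum]
  refine Finset.sum_congr rfl fun k' _ => ?_
  rw [← Nat.cast_smul_eq_nsmul ℤ_[ℓ], smul_smul]
  congr 1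
  -- Ring.inverse (card big) * card mid = Ring.inverse (card small)
  have hcards := card_kerF_mul π hcomp hsurj hn hm
  have hu1 := isUnit_card_kerF π hpgroup hlp n m' hn
  have hu2 := isUnit_card_kerF π hpgroup hlp m' m hm
  rw [hcards, Nat.cast_mul, Ring.mul_inverse_rev, mul_assoc,
    mul_comm (Ring.inverse (((kerF π n m' hn).card : ℤ_[ℓ]))), ← mul_assoc,
    Ring.inverse_mul_cancel _ hu2, one_mul]

theorem sigmaEl_mul_single (π : ∀ m n : ℕ, n ≤ m → (Γ m →* Γ n))
    {n M : ℕ} (h : n ≤ M) {k : Γ M} (hk : k ∈ kerF π n M h) :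
    sigmaEl ℓ π n M h * MonoidAlgebra.single k 1 = sigmaEl ℓ π n M h := by
  rw [sigmaEl, smul_mul_assoc, Finset.sum_mul]
  congr 1
  refine Finset.sum_bij' (fun t _ => t * k) (fun t _ => t * k⁻¹) ?_ ?_ ?_ ?_ ?_
  · intro a ha
    rw [mem_kerF, map_mul, mem_kerF.mp ha, mem_kerF.mp hk, one_mul]
  · intro a ha
    rw [mem_kerF, map_mul, map_inv, mem_kerF.mp ha, mem_kerF.mp hk, one_mul, inv_one]
  · intro a _; group
  · intro a _; group
  · intro a _
    rw [MonoidAlgebra.single_mul_single, one_mul]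

theorem sigmaEl_mul_eq_zero (π : ∀ m n : ℕ, n ≤ m → (Γ m →* Γ n))
    (hsurj : ∀ (m n : ℕ) (h : n ≤ m), Function.Surjective (π m n h))
    {n M : ℕ} (h : n ≤ M) (x : MonoidAlgebra ℤ_[ℓ] (Γ M))
    (hx : MonoidAlgebra.mapDomainRingHom ℤ_[ℓ] (π M n h) x = 0) :
    sigmaEl ℓ π n M h * x = 0 := by
  classical
  let F : MonoidAlgebra ℤ_[ℓ] (Γ M) →+ MonoidAlgebra ℤ_[ℓ] (Γ M) :=
    (MonoidAlgebra.mapDomainLinearMap ℤ_[ℓ] ℤ_[ℓ]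
      ((Function.surjInv (hsurj M n h)) ∘ (π M n h))).toAddMonoidHom
  have hF : ∀ y : MonoidAlgebra ℤ_[ℓ] (Γ M),
      F y = MonoidAlgebra.mapDomain ((Function.surjInv (hsurj M n h)) ∘ (π M n h)) y :=
    fun _ => rfl
  have key : (AddMonoidHom.mulLeft (sigmaEl ℓ π n M h))
      = (AddMonoidHom.mulLeft (sigmaEl ℓ π n M h)).comp F := by
    apply MonoidAlgebra.addMonoidHom_ext
    intro g c
    show sigmaEl ℓ π n M h * MonoidAlgebra.single g c
      = sigmaEl ℓ π n M h * F (MonoidAlgebra.single g c)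
    have hFs : F (MonoidAlgebra.single g c)
        = MonoidAlgebra.single (Function.surjInv (hsurj M n h) ((π M n h) g)) c :=
      MonoidAlgebra.mapDomainLinearMap_single _ _ _
    rw [hFs]
    have hker : (Function.surjInv (hsurj M n h) ((π M n h) g))⁻¹ * g ∈ kerF π n M h := by
      rw [mem_kerF, map_mul, map_inv, Function.surjInv_eq (hsurj M n h), inv_mul_cancel]
    have hrw : (MonoidAlgebra.single g c : MonoidAlgebra ℤ_[ℓ] (Γ M))
        = MonoidAlgebra.single ((Function.surjInv (hsurj M n h) ((π M n h) g))⁻¹ * g) 1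
          * MonoidAlgebra.single (Function.surjInv (hsurj M n h) ((π M n h) g)) c := by
      rw [MonoidAlgebra.single_mul_single, one_mul]
      congr 1
      rw [mul_comm _ g, mul_assoc, inv_mul_cancel, mul_one]
    rw [hrw, ← mul_assoc, sigmaEl_mul_single π h hker]
  have hx' : MonoidAlgebra.mapDomain (π M n h) x = 0 := hx
  have hzero : F x = 0 := by
    have h2 : MonoidAlgebra.mapDomain ((Function.surjInv (hsurj M n h)) ∘ (π M n h)) x
        = MonoidAlgebra.mapDomain (Function.surjInv (hsurj M n h))
            (MonoidAlgebra.mapDomain (π M n h) x) := MonoidAlgebra.ext Finsupp.mapDomain_comp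
    have h3 : F x = MonoidAlgebra.mapDomain (Function.surjInv (hsurj M n h))
        (MonoidAlgebra.mapDomain (π M n h) x) := (hF x).trans h2
    rw [h3, hx', MonoidAlgebra.mapDomain_zero]
  have hkey := DFunLike.congr_fun key x
  simp only [AddMonoidHom.coe_comp, Function.comp_apply] at hkey
  show AddMonoidHom.mulLeft (sigmaEl ℓ π n M h) x = 0
  rw [hkey, hzero, map_zero]

theorem sigmaEl_self (π : ∀ m n : ℕ, n ≤ m → (Γ m →* Γ n))
    (hid : ∀ n, π n n le_rfl = MonoidHom.id (Γ n)) (n : ℕ) :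
    sigmaEl ℓ π n n le_rfl = 1 := by
  have hker : kerF π n n le_rfl = {1} := by
    ext g
    simp [kerF, hid n]
  rw [sigmaEl, hker]
  simp [MonoidAlgebra.one_def]

end AuxSigma2
section AuxEps

variable {ℓ p : ℕ} [Fact ℓ.Prime] [Fact p.Prime]
variable {Γ : ℕ → Type} [∀ n, CommGroup (Γ n)] [∀ n, Fintype (Γ n)]

theorem mapDomain_mapDomain (π : ∀ m n : ℕ, n ≤ m → (Γ m →* Γ n))
    (hcomp : ∀ (k m n : ℕ) (hnm : n ≤ m) (hmk : m ≤ k),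
      (π m n hnm).comp (π k m hmk) = π k n (le_trans hnm hmk))
    {a b c : ℕ} (hcb : c ≤ b) (hba : b ≤ a) (hca : c ≤ a)
    (x : MonoidAlgebra ℤ_[ℓ] (Γ a)) :
    MonoidAlgebra.mapDomainRingHom ℤ_[ℓ] (π b c hcb)
        (MonoidAlgebra.mapDomainRingHom ℤ_[ℓ] (π a b hba) x)
      = MonoidAlgebra.mapDomainRingHom ℤ_[ℓ] (π a c hca) x := by
  have hfun : ⇑(π b c hcb) ∘ ⇑(π a b hba) = ⇑(π a c hca) := by
    rw [← MonoidHom.coe_comp, hcomp a b c hcb hba]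
  rw [mapDomainRingHom_eq, mapDomainRingHom_eq, mapDomainRingHom_eq,
    ← hfun]
  exact MonoidAlgebra.ext Finsupp.mapDomain_comp.symm

/-- Generalized proof-irrelevant form of `mapDomain_sigmaEl`. -/
theorem mapDomain_sigmaEl' (π : ∀ m n : ℕ, n ≤ m → (Γ m →* Γ n))
    (hpgroup : ∀ n, IsPGroup p (Γ n)) (hlp : ℓ ≠ p)
    (hcomp : ∀ (k m n : ℕ) (hnm : n ≤ m) (hmk : m ≤ k),
      (π m n hnm).comp (π k m hmk) = π k n (le_trans hnm hmk))
    (hsurj : ∀ (m n : ℕ) (h : n ≤ m), Function.Surjective (π m n h))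
    {n m' m : ℕ} (hn : n ≤ m') (hm : m' ≤ m) (hnm : n ≤ m) :
    MonoidAlgebra.mapDomainRingHom ℤ_[ℓ] (π m m' hm) (sigmaEl ℓ π n m hnm)
      = sigmaEl ℓ π n m' hn :=
  mapDomain_sigmaEl π hpgroup hlp hcomp hsurj hn hm

/-- The idempotent `ε` generating the kernel of `Λ → ℤ_ℓ[Γ_n]`. -/
noncomputable def epsilonLam (ℓ : ℕ) [Fact ℓ.Prime] {p : ℕ} [Fact p.Prime]
    (Γ : ℕ → Type) [∀ n, CommGroup (Γ n)] [∀ n, Fintype (Γ n)]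
    (π : ∀ m n : ℕ, n ≤ m → (Γ m →* Γ n))
    (hpgroup : ∀ n, IsPGroup p (Γ n)) (hlp : ℓ ≠ p)
    (hcomp : ∀ (k m n : ℕ) (hnm : n ≤ m) (hmk : m ≤ k),
      (π m n hnm).comp (π k m hmk) = π k n (le_trans hnm hmk))
    (hsurj : ∀ (m n : ℕ) (h : n ≤ m), Function.Surjective (π m n h))
    (n : ℕ) : IwasawaAlgebra ℓ Γ π :=
  ⟨fun m => MonoidAlgebra.mapDomainRingHom ℤ_[ℓ] (π (max n m) m (le_max_right n m))
      (1 - sigmaEl ℓ π n (max n m) (le_max_left n m)), by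
    intro m m'' h
    have hM : max n m'' ≤ max n m := max_le (le_max_left n m) (h.trans (le_max_right n m))
    rw [mapDomain_mapDomain π hcomp h (le_max_right n m)
        ((le_max_right n m'').trans hM),
      ← mapDomain_mapDomain π hcomp (le_max_right n m'') hM
        ((le_max_right n m'').trans hM), map_sub, map_one,
      mapDomain_sigmaEl' π hpgroup hlp hcomp hsurj (le_max_left n m'') hM (le_max_left n m)]⟩

theorem epsilonLam_coord (π : ∀ m n : ℕ, n ≤ m → (Γ m →* Γ n))
    (hpgroup : ∀ n, IsPGroup p (Γ n)) (hlp : ℓ ≠ p)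
    (hcomp : ∀ (k m n : ℕ) (hnm : n ≤ m) (hmk : m ≤ k),
      (π m n hnm).comp (π k m hmk) = π k n (le_trans hnm hmk))
    (hsurj : ∀ (m n : ℕ) (h : n ≤ m), Function.Surjective (π m n h))
    (n j M : ℕ) (hnM : n ≤ M) (hjM : j ≤ M) :
    ((epsilonLam ℓ Γ π hpgroup hlp hcomp hsurj n : IwasawaAlgebra ℓ Γ π) :
        ∀ k, MonoidAlgebra ℤ_[ℓ] (Γ k)) j
      = MonoidAlgebra.mapDomainRingHom ℤ_[ℓ] (π M j hjM) (1 - sigmaEl ℓ π n M hnM) := by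
  show MonoidAlgebra.mapDomainRingHom ℤ_[ℓ] (π (max n j) j (le_max_right n j))
      (1 - sigmaEl ℓ π n (max n j) (le_max_left n j)) = _
  have hM : max n j ≤ M := max_le hnM hjM
  have hinner : MonoidAlgebra.mapDomainRingHom ℤ_[ℓ] (π M (max n j) hM)
      (1 - sigmaEl ℓ π n M hnM) = 1 - sigmaEl ℓ π n (max n j) (le_max_left n j) := by
    rw [map_sub, map_one,
      mapDomain_sigmaEl' π hpgroup hlp hcomp hsurj (le_max_left n j) hM hnM]
  rw [← mapDomain_mapDomain π hcomp (le_max_right n j) hM hjM, hinner]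

theorem epsilonLam_n (π : ∀ m n : ℕ, n ≤ m → (Γ m →* Γ n))
    (hpgroup : ∀ n, IsPGroup p (Γ n)) (hlp : ℓ ≠ p)
    (hid : ∀ n, π n n le_rfl = MonoidHom.id (Γ n))
    (hcomp : ∀ (k m n : ℕ) (hnm : n ≤ m) (hmk : m ≤ k),
      (π m n hnm).comp (π k m hmk) = π k n (le_trans hnm hmk))
    (hsurj : ∀ (m n : ℕ) (h : n ≤ m), Function.Surjective (π m n h))
    (n : ℕ) :
    ((epsilonLam ℓ Γ π hpgroup hlp hcomp hsurj n : IwasawaAlgebra ℓ Γ π) :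
        ∀ k, MonoidAlgebra ℤ_[ℓ] (Γ k)) n = 0 := by
  rw [epsilonLam_coord π hpgroup hlp hcomp hsurj n n n le_rfl le_rfl,
    sigmaEl_self π hid n, sub_self, map_zero]

theorem epsilonLam_mul (π : ∀ m n : ℕ, n ≤ m → (Γ m →* Γ n))
    (hpgroup : ∀ n, IsPGroup p (Γ n)) (hlp : ℓ ≠ p)
    (hcomp : ∀ (k m n : ℕ) (hnm : n ≤ m) (hmk : m ≤ k),
      (π m n hnm).comp (π k m hmk) = π k n (le_trans hnm hmk))
    (hsurj : ∀ (m n : ℕ) (h : n ≤ m), Function.Surjective (π m n h))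
    (n : ℕ) (x : IwasawaAlgebra ℓ Γ π)
    (hxn : ((x : ∀ k, MonoidAlgebra ℤ_[ℓ] (Γ k))) n = 0) (m : ℕ) :
    ((epsilonLam ℓ Γ π hpgroup hlp hcomp hsurj n : IwasawaAlgebra ℓ Γ π) :
        ∀ k, MonoidAlgebra ℤ_[ℓ] (Γ k)) m * (x : ∀ k, MonoidAlgebra ℤ_[ℓ] (Γ k)) m
      = (x : ∀ k, MonoidAlgebra ℤ_[ℓ] (Γ k)) m := by
  set M := max n m with hMdef
  have hnM : n ≤ M := le_max_left n m
  have hmM : m ≤ M := le_max_right n m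
  have hxM : MonoidAlgebra.mapDomainRingHom ℤ_[ℓ] (π M n hnM)
      ((x : ∀ k, MonoidAlgebra ℤ_[ℓ] (Γ k)) M) = 0 := by
    rw [x.2 M n hnM, hxn]
  have hσ : sigmaEl ℓ π n M hnM * (x : ∀ k, MonoidAlgebra ℤ_[ℓ] (Γ k)) M = 0 :=
    sigmaEl_mul_eq_zero π hsurj hnM _ hxM
  rw [epsilonLam_coord π hpgroup hlp hcomp hsurj n m M hnM hmM,
    ← x.2 M m hmM, ← map_mul, sub_mul, one_mul, hσ, sub_zero]

end AuxEps
section AuxZ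

variable {ℓ p : ℕ} [Fact ℓ.Prime] [Fact p.Prime]
variable {Γ : ℕ → Type} [∀ n, CommGroup (Γ n)] [∀ n, Fintype (Γ n)]

/-- Approximations to `ε` lying in the algebraic augmentation ideal. -/
noncomputable def zElt (ℓ : ℕ) [Fact ℓ.Prime]
    (Γ : ℕ → Type) [∀ n, CommGroup (Γ n)] [∀ n, Fintype (Γ n)]
    (π : ∀ m n : ℕ, n ≤ m → (Γ m →* Γ n))
    (hid : ∀ n, π n n le_rfl = MonoidHom.id (Γ n))
    (hcomp : ∀ (k m n : ℕ) (hnm : n ≤ m) (hmk : m ≤ k),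
      (π m n hnm).comp (π k m hmk) = π k n (le_trans hnm hmk))
    (hsurj : ∀ (m n : ℕ) (h : n ≤ m), Function.Surjective (π m n h))
    (n M : ℕ) (hn : n ≤ M) : IwasawaAlgebra ℓ Γ π :=
  constLam ℓ Γ π (- Ring.inverse (((kerF π n M hn).card : ℤ_[ℓ]))) *
    ∑ k ∈ (kerF π n M hn).attach,
      (gammaToLambda ℓ Γ π (gammaLift π hid hcomp hsurj M k.1) - 1)

theorem zElt_mem (π : ∀ m n : ℕ, n ≤ m → (Γ m →* Γ n))
    (hid : ∀ n, π n n le_rfl = MonoidHom.id (Γ n))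
    (hcomp : ∀ (k m n : ℕ) (hnm : n ≤ m) (hmk : m ≤ k),
      (π m n hnm).comp (π k m hmk) = π k n (le_trans hnm hmk))
    (hsurj : ∀ (m n : ℕ) (h : n ≤ m), Function.Surjective (π m n h))
    (n M : ℕ) (hn : n ≤ M) :
    zElt ℓ Γ π hid hcomp hsurj n M hn ∈
      Ideal.span ((fun γ : IwasawaGamma Γ π => gammaToLambda ℓ Γ π γ - 1) ''
        {γ : IwasawaGamma Γ π | (γ : ∀ k, Γ k) n = 1}) := by
  apply Ideal.mul_mem_left
  apply Ideal.sum_mem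
  rintro ⟨k, hk⟩ -
  apply Ideal.subset_span
  refine ⟨gammaLift π hid hcomp hsurj M k, ?_, rfl⟩
  show ((gammaLift π hid hcomp hsurj M k : IwasawaGamma Γ π) : ∀ j, Γ j) n = 1
  rw [gammaLift_coord π hid hcomp hsurj M k n hn, mem_kerF.mp hk]

theorem zElt_coord_self (π : ∀ m n : ℕ, n ≤ m → (Γ m →* Γ n))
    (hpgroup : ∀ n, IsPGroup p (Γ n)) (hlp : ℓ ≠ p)
    (hid : ∀ n, π n n le_rfl = MonoidHom.id (Γ n))
    (hcomp : ∀ (k m n : ℕ) (hnm : n ≤ m) (hmk : m ≤ k),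
      (π m n hnm).comp (π k m hmk) = π k n (le_trans hnm hmk))
    (hsurj : ∀ (m n : ℕ) (h : n ≤ m), Function.Surjective (π m n h))
    (n M : ℕ) (hn : n ≤ M) :
    ((zElt ℓ Γ π hid hcomp hsurj n M hn : IwasawaAlgebra ℓ Γ π) :
        ∀ k, MonoidAlgebra ℤ_[ℓ] (Γ k)) M = 1 - sigmaEl ℓ π n M hn := by
  have hcoord : ((zElt ℓ Γ π hid hcomp hsurj n M hn : IwasawaAlgebra ℓ Γ π) :
        ∀ k, MonoidAlgebra ℤ_[ℓ] (Γ k)) M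
      = MonoidAlgebra.single 1 (- Ring.inverse (((kerF π n M hn).card : ℤ_[ℓ]))) *
          ∑ k ∈ (kerF π n M hn).attach,
            (MonoidAlgebra.single
              (((gammaLift π hid hcomp hsurj M k.1 : IwasawaGamma Γ π) : ∀ j, Γ j) M) 1
              - 1) := by
    show (constLam ℓ Γ π _ : IwasawaAlgebra ℓ Γ π).1 M *
        ((∑ k ∈ (kerF π n M hn).attach,
          (gammaToLambda ℓ Γ π (gammaLift π hid hcomp hsurj M k.1) - 1)
            : IwasawaAlgebra ℓ Γ π) : ∀ k, MonoidAlgebra ℤ_[ℓ] (Γ k)) M = _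
    congr 1
    rw [show ((∑ k ∈ (kerF π n M hn).attach,
        (gammaToLambda ℓ Γ π (gammaLift π hid hcomp hsurj M k.1) - 1)
          : IwasawaAlgebra ℓ Γ π) : ∀ k, MonoidAlgebra ℤ_[ℓ] (Γ k))
      = ∑ k ∈ (kerF π n M hn).attach,
          ((gammaToLambda ℓ Γ π (gammaLift π hid hcomp hsurj M k.1) - 1
            : IwasawaAlgebra ℓ Γ π) : ∀ k, MonoidAlgebra ℤ_[ℓ] (Γ k)) from
      AddSubmonoidClass.coe_finset_sum _ _]
    rw [Finset.sum_apply]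
    rfl
  rw [hcoord]
  have hsum : ∑ k ∈ (kerF π n M hn).attach,
      (MonoidAlgebra.single
        (((gammaLift π hid hcomp hsurj M k.1 : IwasawaGamma Γ π) : ∀ j, Γ j) M)
        (1 : ℤ_[ℓ]) - 1)
      = ∑ k ∈ kerF π n M hn, (MonoidAlgebra.single k (1 : ℤ_[ℓ]) - 1) := by
    rw [← Finset.sum_attach (kerF π n M hn) (fun k => MonoidAlgebra.single k (1:ℤ_[ℓ]) - 1)]
    refine Finset.sum_congr rfl fun k _ => ?_
    rw [gammaLift_self π hid hcomp hsurj M k.1]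
  rw [hsum, Finset.sum_sub_distrib, Finset.sum_const]
  have hone : (MonoidAlgebra.single 1 (- Ring.inverse (((kerF π n M hn).card : ℤ_[ℓ])))
      : MonoidAlgebra ℤ_[ℓ] (Γ M))
      = (- Ring.inverse (((kerF π n M hn).card : ℤ_[ℓ]))) • 1 := by
    rw [MonoidAlgebra.one_def, MonoidAlgebra.smul_single', mul_one]
  rw [hone, smul_mul_assoc, one_mul, smul_sub, neg_smul, neg_smul, sub_neg_eq_add]
  have hcardsmul : (Ring.inverse (((kerF π n M hn).card : ℤ_[ℓ]))) •
      ((kerF π n M hn).card • (1 : MonoidAlgebra ℤ_[ℓ] (Γ M))) = 1 := by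
    rw [← Nat.cast_smul_eq_nsmul ℤ_[ℓ], smul_smul,
      Ring.inverse_mul_cancel _ (isUnit_card_kerF π hpgroup hlp n M hn), one_smul]
  rw [hcardsmul, sigmaEl]
  abel

theorem zElt_coord (π : ∀ m n : ℕ, n ≤ m → (Γ m →* Γ n))
    (hpgroup : ∀ n, IsPGroup p (Γ n)) (hlp : ℓ ≠ p)
    (hid : ∀ n, π n n le_rfl = MonoidHom.id (Γ n))
    (hcomp : ∀ (k m n : ℕ) (hnm : n ≤ m) (hmk : m ≤ k),
      (π m n hnm).comp (π k m hmk) = π k n (le_trans hnm hmk))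
    (hsurj : ∀ (m n : ℕ) (h : n ≤ m), Function.Surjective (π m n h))
    (n M : ℕ) (hn : n ≤ M) (j : ℕ) (hj : j ≤ M) :
    ((zElt ℓ Γ π hid hcomp hsurj n M hn : IwasawaAlgebra ℓ Γ π) :
        ∀ k, MonoidAlgebra ℤ_[ℓ] (Γ k)) j
      = ((epsilonLam ℓ Γ π hpgroup hlp hcomp hsurj n : IwasawaAlgebra ℓ Γ π) :
          ∀ k, MonoidAlgebra ℤ_[ℓ] (Γ k)) j := by
  rw [← (zElt ℓ Γ π hid hcomp hsurj n M hn).2 M j hj,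
    zElt_coord_self π hpgroup hlp hid hcomp hsurj n M hn,
    epsilonLam_coord π hpgroup hlp hcomp hsurj n j M hn hj]

end AuxZ

/-- Augmentation ideals of the Iwasawa algebra: with `G_n := ker(Γ → Γ_n)` and
`I_n` the closure of the ideal of `Λ` generated by `{γ - 1 : γ ∈ G_n}`, the natural
projection `Λ → ℤ_ℓ[Γ_n]` is surjective with kernel `I_n` (hence `Λ/I_n ≅ ℤ_ℓ[Γ_n]`),
and `I_n` is idempotent: `I_n² = I_n`. -/
theorem augmentation_ideal_ker_and_idempotent
    (Γ : ℕ → Type) [∀ n, CommGroup (Γ n)] [∀ n, Fintype (Γ n)]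
    (π : ∀ m n : ℕ, n ≤ m → (Γ m →* Γ n))
    (hpgroup : ∀ n, IsPGroup p (Γ n)) (hlp : ℓ ≠ p)
    (hid : ∀ n, π n n le_rfl = MonoidHom.id (Γ n))
    (hcomp : ∀ (k m n : ℕ) (hnm : n ≤ m) (hmk : m ≤ k),
      (π m n hnm).comp (π k m hmk) = π k n (le_trans hnm hmk))
    (hsurj : ∀ (m n : ℕ) (h : n ≤ m), Function.Surjective (π m n h))
    (n : ℕ)
    -- the ideal generated by `{γ - 1 : γ ∈ G_n}`, `G_n = ker (Γ → Γ_n)`: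
    (J : Ideal (IwasawaAlgebra ℓ Γ π))
    (hJ : J = Ideal.span ((fun γ : IwasawaGamma Γ π => gammaToLambda ℓ Γ π γ - 1) ''
      {γ : IwasawaGamma Γ π | (γ : ∀ n, Γ n) n = 1})) :
    Function.Surjective (lambdaProj ℓ Γ π n) ∧
    ((RingHom.ker (lambdaProj ℓ Γ π n) : Set (IwasawaAlgebra ℓ Γ π)) =
      closure (J : Set (IwasawaAlgebra ℓ Γ π))) ∧
    (∃ e : (IwasawaAlgebra ℓ Γ π ⧸ RingHom.ker (lambdaProj ℓ Γ π n)) ≃+*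
        MonoidAlgebra ℤ_[ℓ] (Γ n),
      ∀ x, e (Ideal.Quotient.mk (RingHom.ker (lambdaProj ℓ Γ π n)) x) =
        lambdaProj ℓ Γ π n x) ∧
    (∀ K : Ideal (IwasawaAlgebra ℓ Γ π),
      (K : Set (IwasawaAlgebra ℓ Γ π)) = closure (J : Set (IwasawaAlgebra ℓ Γ π)) →
        K * K = K) := by
  -- Surjectivity
  have hsurjP : Function.Surjective (lambdaProj ℓ Γ π n) := by
    intro y
    refine ⟨∑ g ∈ y.coeff.support.attach,
      constLam ℓ Γ π (y.coeff g.1) *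
        gammaToLambda ℓ Γ π (gammaLift π hid hcomp hsurj n g.1), ?_⟩
    rw [map_sum]
    have hterm : ∀ g ∈ y.coeff.support.attach,
        lambdaProj ℓ Γ π n (constLam ℓ Γ π (y.coeff g.1) *
          gammaToLambda ℓ Γ π (gammaLift π hid hcomp hsurj n g.1))
        = MonoidAlgebra.single g.1 (y.coeff g.1) := by
      intro g _
      rw [map_mul]
      have h1 : lambdaProj ℓ Γ π n (constLam ℓ Γ π (y.coeff g.1))
          = MonoidAlgebra.single 1 (y.coeff g.1) := rfl
      have h2 : lambdaProj ℓ Γ π n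
          (gammaToLambda ℓ Γ π (gammaLift π hid hcomp hsurj n g.1))
          = MonoidAlgebra.single g.1 1 := by
        show MonoidAlgebra.single
          (((gammaLift π hid hcomp hsurj n g.1 : IwasawaGamma Γ π) : ∀ j, Γ j) n) 1 = _
        rw [gammaLift_self π hid hcomp hsurj n g.1]
      rw [h1, h2, MonoidAlgebra.single_mul_single, one_mul, mul_one]
    rw [Finset.sum_congr rfl hterm,
      Finset.sum_attach y.coeff.support (fun g => MonoidAlgebra.single g (y.coeff g))]
    exact MonoidAlgebra.sum_coeff_single y
  -- The kernel is closed
  have hclosed : IsClosed ((RingHom.ker (lambdaProj ℓ Γ π n) : Ideal _) :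
      Set (IwasawaAlgebra ℓ Γ π)) := by
    have hset : ((RingHom.ker (lambdaProj ℓ Γ π n) : Ideal _) :
        Set (IwasawaAlgebra ℓ Γ π))
        = (fun x : IwasawaAlgebra ℓ Γ π =>
            (⇑(((x : ∀ k, MonoidAlgebra ℤ_[ℓ] (Γ k)) n).coeff) : Γ n → ℤ_[ℓ])) ⁻¹' {0} := by
      ext x
      simp only [SetLike.mem_coe, RingHom.mem_ker, Set.mem_preimage,
        Set.mem_singleton_iff]
      constructor
      · intro h
        have hx : (x : ∀ k, MonoidAlgebra ℤ_[ℓ] (Γ k)) n = 0 := h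
        rw [hx]
        exact Finsupp.coe_zero
      · intro h
        show (x : ∀ k, MonoidAlgebra ℤ_[ℓ] (Γ k)) n = 0
        exact MonoidAlgebra.coeff_eq_zero.mp (Finsupp.coe_eq_zero.mp h)
    rw [hset]
    apply IsClosed.preimage
    · exact (continuous_induced_dom (f := fun x : MonoidAlgebra ℤ_[ℓ] (Γ n) =>
        (x.coeff : Γ n → ℤ_[ℓ]))).comp ((continuous_apply n).comp continuous_subtype_val)
    · exact isClosed_singleton
  -- J ⊆ ker
  have hJker : J ≤ RingHom.ker (lambdaProj ℓ Γ π n) := by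
    rw [hJ, Ideal.span_le]
    rintro _ ⟨γ, hγ, rfl⟩
    rw [SetLike.mem_coe, RingHom.mem_ker, map_sub, map_one]
    have : lambdaProj ℓ Γ π n (gammaToLambda ℓ Γ π γ) = 1 := by
      show MonoidAlgebra.single ((γ : ∀ j, Γ j) n) 1 = 1
      rw [hγ, MonoidAlgebra.one_def]
    rw [this, sub_self]
  -- ker = closure J
  have hker : ((RingHom.ker (lambdaProj ℓ Γ π n) : Ideal _) :
      Set (IwasawaAlgebra ℓ Γ π)) = closure (J : Set (IwasawaAlgebra ℓ Γ π)) := by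
    apply Set.Subset.antisymm
    · intro x hx
      have hxn : (x : ∀ k, MonoidAlgebra ℤ_[ℓ] (Γ k)) n = 0 :=
        RingHom.mem_ker.mp hx
      set w : ℕ → IwasawaAlgebra ℓ Γ π := fun m =>
        zElt ℓ Γ π hid hcomp hsurj n (max n m) (le_max_left n m) * x with hw
      have hwJ : ∀ m, w m ∈ J := by
        intro m
        rw [hJ]
        exact Ideal.mul_mem_right x _
          (zElt_mem π hid hcomp hsurj n (max n m) (le_max_left n m))
      have hconv : Filter.Tendsto w Filter.atTop (nhds x) := by
        rw [tendsto_subtype_rng, tendsto_pi_nhds]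
        intro j
        refine Filter.Tendsto.congr' ?_ tendsto_const_nhds
        filter_upwards [Filter.eventually_ge_atTop j] with m hm
        have hjM : j ≤ max n m := le_trans hm (le_max_right n m)
        show (x : ∀ k, MonoidAlgebra ℤ_[ℓ] (Γ k)) j
          = ((w m : IwasawaAlgebra ℓ Γ π) : ∀ k, MonoidAlgebra ℤ_[ℓ] (Γ k)) j
        have hwm : ((w m : IwasawaAlgebra ℓ Γ π) : ∀ k, MonoidAlgebra ℤ_[ℓ] (Γ k)) j
            = ((zElt ℓ Γ π hid hcomp hsurj n (max n m) (le_max_left n m) :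
                IwasawaAlgebra ℓ Γ π) : ∀ k, MonoidAlgebra ℤ_[ℓ] (Γ k)) j *
              (x : ∀ k, MonoidAlgebra ℤ_[ℓ] (Γ k)) j := rfl
        rw [hwm, zElt_coord π hpgroup hlp hid hcomp hsurj n (max n m)
            (le_max_left n m) j hjM,
          epsilonLam_mul π hpgroup hlp hcomp hsurj n x hxn j]
      exact mem_closure_of_tendsto hconv (Filter.Eventually.of_forall hwJ)
    · exact closure_minimal hJker hclosed
  refine ⟨hsurjP, hker, ⟨RingHom.quotientKerEquivOfSurjective hsurjP, fun x => ?_⟩, ?_⟩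
  · exact RingHom.kerLift_mk (lambdaProj ℓ Γ π n) x
  · intro K hK
    have hKker : K = RingHom.ker (lambdaProj ℓ Γ π n) :=
      SetLike.ext' (hK.trans hker.symm)
    rw [hKker]
    apply le_antisymm
    · exact Ideal.mul_le_left
    · intro x hx
      have hxn : (x : ∀ k, MonoidAlgebra ℤ_[ℓ] (Γ k)) n = 0 :=
        RingHom.mem_ker.mp hx
      have hε : epsilonLam ℓ Γ π hpgroup hlp hcomp hsurj n ∈
          RingHom.ker (lambdaProj ℓ Γ π n) := by
        rw [RingHom.mem_ker]
        exact epsilonLam_n π hpgroup hlp hid hcomp hsurj n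
      have hmul : epsilonLam ℓ Γ π hpgroup hlp hcomp hsurj n * x = x := by
        apply Subtype.ext
        funext m
        exact epsilonLam_mul π hpgroup hlp hcomp hsurj n x hxn m
      rw [← hmul]
      exact Ideal.mul_mem_mul hε hx
end

section
/- Let (R_i)_{i∈I} be a family of discrete valuation rings, with maximal ideals 𝔪_i and residue fields k_i := R_i/𝔪_i, let M_i be an R_i-module for each i, and regard M := ∏_{i∈I} M_i as a module over the product ring R := ∏_{i∈I} R_i (componentwise operations). Then M is a finitely generated R-module if and only if every M_i is a finitely generated R_i-module and the function i ↦ dim_{k_i}(M_i/𝔪_i M_i) is bounded on I. -/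
open Submodule Module Function Set

section Aux

variable {A : Type*} [CommRing A] [IsLocalRing A] {N : Type*} [AddCommGroup N] [Module A N]

local notation "𝔪" => IsLocalRing.maximalIdeal A

lemma aux_span_quotient_iff [Module.Finite A N] (s : Set N) :
    span (A ⧸ IsLocalRing.maximalIdeal A)
      ((𝔪 • (⊤ : Submodule A N)).mkQ '' s) = ⊤ ↔ span A s = ⊤ := by
  rw [← IsLocalRing.map_mkQ_eq_top (N := span A s), Submodule.map_span,
    ← Submodule.restrictScalars_span A (A ⧸ IsLocalRing.maximalIdeal A)
      Ideal.Quotient.mk_surjective, restrictScalars_eq_top_iff]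

lemma aux_finrank_le [Module.Finite A N] {n : ℕ} (v : Fin n → N)
    (hv : span A (Set.range v) = ⊤) :
    Module.finrank (A ⧸ IsLocalRing.maximalIdeal A)
      (N ⧸ (𝔪 • (⊤ : Submodule A N))) ≤ n := by
  letI : Field (A ⧸ IsLocalRing.maximalIdeal A) := Ideal.Quotient.field _
  have h := (aux_span_quotient_iff (Set.range v)).mpr hv
  rw [← Set.range_comp] at h
  simpa using finrank_le_of_span_eq_top h

lemma aux_exists_gens [Module.Finite A N] {C : ℕ}
    (h : Module.finrank (A ⧸ IsLocalRing.maximalIdeal A)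
      (N ⧸ (𝔪 • (⊤ : Submodule A N))) ≤ C) :
    ∃ v : Fin C → N, span A (Set.range v) = ⊤ := by
  letI : Field (A ⧸ IsLocalRing.maximalIdeal A) := Ideal.Quotient.field _
  set Q := N ⧸ (𝔪 • (⊤ : Submodule A N)) with hQ
  haveI : Module.Finite A Q := Module.Finite.quotient A _
  haveI : Module.Finite (A ⧸ IsLocalRing.maximalIdeal A) Q :=
    Module.Finite.of_restrictScalars_finite A _ _
  set d := Module.finrank (A ⧸ IsLocalRing.maximalIdeal A) Q with hd
  obtain b := Module.finBasis (A ⧸ IsLocalRing.maximalIdeal A) Q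
  choose w hw using fun j : Fin d =>
    Submodule.mkQ_surjective (𝔪 • (⊤ : Submodule A N)) (b j)
  refine ⟨fun j => if h' : (j : ℕ) < d then w ⟨j, h'⟩ else 0, ?_⟩
  rw [← aux_span_quotient_iff, ← Set.range_comp, ← top_le_iff, ← b.span_eq, span_le]
  rintro x ⟨j, rfl⟩
  refine subset_span ⟨⟨j, lt_of_lt_of_le j.2 h⟩, ?_⟩
  simp only [comp_apply]
  rw [dif_pos (show ((⟨(j : ℕ), lt_of_lt_of_le j.2 h⟩ : Fin C) : ℕ) < d from j.2)]
  exact hw j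

end Aux

/-- Finite-generation criterion for a product of modules over a product of discrete
valuation rings: `M = ∏ i, M i` is finitely generated over `R = ∏ i, R i` if and only if
every `M i` is finitely generated over `R i` and the residual dimensions
`dim_{k_i} (M_i / 𝔪_i M_i)` are bounded. -/
theorem module_finite_pi_iff_locally_finite_and_bounded_rank
    (ι : Type*) (R : ι → Type*) (M : ι → Type*)
    [∀ i, CommRing (R i)] [∀ i, IsDomain (R i)] [∀ i, IsDiscreteValuationRing (R i)]
    [∀ i, AddCommGroup (M i)] [∀ i, Module (R i) (M i)] :
    Module.Finite (∀ i, R i) (∀ i, M i) ↔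
      ((∀ i, Module.Finite (R i) (M i)) ∧
        ∃ C : ℕ, ∀ i,
          Module.finrank (R i ⧸ IsLocalRing.maximalIdeal (R i))
            ((M i) ⧸ (IsLocalRing.maximalIdeal (R i)) • (⊤ : Submodule (R i) (M i))) ≤ C) := by
  classical
  haveI : ∀ i, RingHomSurjective (Pi.evalRingHom R i) := fun i =>
    ⟨fun x => ⟨Pi.single i x, Pi.single_eq_same i x⟩⟩
  constructor
  · intro H
    obtain ⟨s, hs⟩ := H.fg_top
    set n := s.card with hn
    set u : Fin n → (∀ i, M i) := fun j => (s.equivFin.symm j : ∀ i, M i) with hu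
    have hru : Set.range u = (s : Set (∀ i, M i)) := by
      rw [hu]
      rw [show (fun j => (s.equivFin.symm j : ∀ i, M i)) =
        (Subtype.val ∘ s.equivFin.symm) from rfl, Set.range_comp,
        Equiv.range_eq_univ, Set.image_univ, Subtype.range_coe]
    have hspan : span (∀ i, R i) (Set.range u) = ⊤ := by rw [hru, hs]
    -- the evaluation semilinear map
    have key : ∀ i, span (R i) (Set.range fun j : Fin n => u j i) = ⊤ := by
      intro i
      let p : (∀ j, M j) →ₛₗ[Pi.evalRingHom R i] M i :=
        { toFun := fun f => f i
          map_add' := fun _ _ => rfl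
          map_smul' := fun _ _ => rfl }
      have hps : Function.Surjective p := fun x => ⟨Pi.single i x, Pi.single_eq_same i x⟩
      have : span (R i) (p '' Set.range u) = ⊤ := by
        rw [← Submodule.map_span, hspan, Submodule.map_top, LinearMap.range_eq_top.mpr hps]
      rwa [← Set.range_comp] at this
    have hfin : ∀ i, Module.Finite (R i) (M i) := by
      intro i
      refine ⟨⟨Finset.univ.image (fun j : Fin n => u j i), ?_⟩⟩
      rw [Finset.coe_image, Finset.coe_univ, Set.image_univ]
      exact key i
    refine ⟨hfin, n, fun i => ?_⟩
    haveI := hfin i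
    exact aux_finrank_le _ (key i)
  · rintro ⟨hfin, C, hC⟩
    haveI := hfin
    choose v hv using fun i => aux_exists_gens (hC i)
    set g : Fin C → ∀ i, M i := fun j i => v i j with hg
    refine ⟨⟨Finset.univ.image g, ?_⟩⟩
    rw [Finset.coe_image, Finset.coe_univ, Set.image_univ, eq_top_iff]
    intro x _
    rw [mem_span_range_iff_exists_fun]
    have : ∀ i, ∃ c : Fin C → R i, (∑ j, c j • v i j) = x i := fun i =>
      (mem_span_range_iff_exists_fun (R i)).mp ((hv i).ge Submodule.mem_top)
    choose c hc using this
    exact ⟨fun j i => c i j, by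
      funext i
      simpa [Finset.sum_apply] using hc i⟩
end
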